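/- arXiv:2403.17463 — 2 statements merged into one kernel-verified Lean document; each statement's English description precedes it below -/
import Mathlib

section
/- (Proposition sharp, Hopf–Lax form.) Let J be a nonempty compact interval of ℝ, and suppose u_T is left continuous, takes values in J, and satisfies the Oleinik condition (O) at T. Then U_o^♯(x) := sup { U_o(x) : U_o ∈ II_T(U_T; J) } is finite for every x ∈ ℝ and U_o^♯ ∈ II_T(U_T; J). -/
open Filter MeasureTheory

/-- Condition (f): `f` is `C²`, strongly convex (`f'' > 0` everywhere), and
`f' → ∓∞` at `∓∞`. -/
def CondF (f : ℝ → ℝ) : Prop :=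
  ContDiff ℝ 2 f ∧ (∀ x, 0 < deriv (deriv f) x) ∧
    Tendsto (deriv f) atBot atBot ∧ Tendsto (deriv f) atTop atTop

/-- The Legendre transform `f*(y) = sup_x (y·x − f(x))`. -/
noncomputable def legendre (f : ℝ → ℝ) (y : ℝ) : ℝ :=
  sSup (Set.range fun x => y * x - f x)

/-- `U_T(x) = ∫_{x̌}^x u_T`. -/
noncomputable def UT (uT : ℝ → ℝ) (xc x : ℝ) : ℝ := ∫ ξ in xc..x, uT ξ

/-- `U_o^♭(x) = sup_ξ [U_T(ξ) − T f*((ξ−x)/T)]`. -/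
noncomputable def Uflat (f : ℝ → ℝ) (T : ℝ) (uT : ℝ → ℝ) (xc x : ℝ) : ℝ :=
  sSup (Set.range fun ξ => UT uT xc ξ - T * legendre f ((ξ - x) / T))

/-- `M(x)`: the set of maximizers in the definition of `U_o^♭(x)`. -/
def MSet (f : ℝ → ℝ) (T : ℝ) (uT : ℝ → ℝ) (xc x : ℝ) : Set ℝ :=
  {ξ | UT uT xc ξ = Uflat f T uT xc x + T * legendre f ((ξ - x) / T)}

/-- Oleinik condition (O) at `T`. -/
def Oleinik (f : ℝ → ℝ) (T : ℝ) (uT : ℝ → ℝ) : Prop :=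
  ∀ x Δ : ℝ, 0 < Δ → deriv f (uT (x + Δ)) - deriv f (uT x) ≤ Δ / T

/-- The Hopf–Lax operator at time `T`: `(S_T U)(x) = inf_ξ [U(ξ) + T f*((x−ξ)/T)]`. -/
noncomputable def HopfLax (f : ℝ → ℝ) (T : ℝ) (U : ℝ → ℝ) (x : ℝ) : ℝ :=
  sInf (Set.range fun ξ => U ξ + T * legendre f ((x - ξ) / T))

/-- Left continuity of a real function. -/
def LeftCts (u : ℝ → ℝ) : Prop :=
  ∀ x, Tendsto u (nhdsWithin x (Set.Iio x)) (nhds (u x))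

/-- `II_T(U_T; J)`: Lipschitz functions with a.e. derivative in `J` evolving into `U_T`
under the Hopf–Lax semigroup. -/
def IIT (f : ℝ → ℝ) (T : ℝ) (uT : ℝ → ℝ) (xc : ℝ) (J : Set ℝ) : Set (ℝ → ℝ) :=
  {U | (∃ K, LipschitzWith K U) ∧ (∀ᵐ x ∂volume, deriv U x ∈ J) ∧
    ∀ x, HopfLax f T U x = UT uT xc x}

/-- `U_o^♯(x) = sup { U(x) : U ∈ II_T(U_T; J) }`. -/
noncomputable def Usharp (f : ℝ → ℝ) (T : ℝ) (uT : ℝ → ℝ) (xc : ℝ) (J : Set ℝ) (x : ℝ) : ℝ :=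
  sSup ((fun U : ℝ → ℝ => U x) '' IIT f T uT xc J)

lemma f_diff {f : ℝ → ℝ} (hf : CondF f) : Differentiable ℝ f :=
  hf.1.differentiable (by norm_num)

lemma deriv_cont {f : ℝ → ℝ} (hf : CondF f) : Continuous (deriv f) := by
  have h2 := hf.1
  rw [show ((2 : WithTop ℕ∞)) = 1 + 1 by norm_num] at h2
  exact ((contDiff_succ_iff_deriv).mp h2).2.2.continuous

lemma deriv_strictMono {f : ℝ → ℝ} (hf : CondF f) : StrictMono (deriv f) :=
  strictMono_of_deriv_pos hf.2.1

lemma deriv_surj {f : ℝ → ℝ} (hf : CondF f) : Function.Surjective (deriv f) :=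
  (deriv_cont hf).surjective hf.2.2.2 hf.2.2.1

/-- tangent line inequality (convexity) -/
lemma tangent {f : ℝ → ℝ} (hf : CondF f) (a x : ℝ) :
    deriv f a * (x - a) + f a ≤ f x := by
  rcases lt_trichotomy a x with h | h | h
  · obtain ⟨c, hc, hc'⟩ := exists_deriv_eq_slope f h (f_diff hf).continuous.continuousOn
      (fun z _ => (f_diff hf).differentiableAt.differentiableWithinAt)
    have h1 : deriv f a ≤ deriv f c := ((deriv_strictMono hf).le_iff_le).mpr (le_of_lt hc.1)
    have hx : 0 < x - a := by linarith
    have h2 : f x - f a = deriv f c * (x - a) := by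
      field_simp at hc'; linarith [hc']
    nlinarith
  · simp [h]
  · obtain ⟨c, hc, hc'⟩ := exists_deriv_eq_slope f h (f_diff hf).continuous.continuousOn
      (fun z _ => (f_diff hf).differentiableAt.differentiableWithinAt)
    have h1 : deriv f c ≤ deriv f a := ((deriv_strictMono hf).le_iff_le).mpr (le_of_lt hc.2)
    have hx : 0 < a - x := by linarith
    have h2 : f a - f x = deriv f c * (a - x) := by
      field_simp at hc'; linarith [hc']
    nlinarith

/-- key: existence of a nice inverse `g` of `deriv f`. -/
lemma exists_g {f : ℝ → ℝ} (hf : CondF f) :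
    ∃ g : ℝ → ℝ, Continuous g ∧ StrictMono g ∧ (∀ x, g (deriv f x) = x) ∧
      (∀ y, deriv f (g y) = y) := by
  set e := StrictMono.orderIsoOfSurjective (deriv f) (deriv_strictMono hf) (deriv_surj hf)
  refine ⟨fun y => e.symm y, ?_, ?_, ?_, ?_⟩
  · exact e.symm.continuous
  · exact fun a b hab => e.symm.strictMono hab
  · intro x
    exact e.symm_apply_apply x
  · intro y
    exact e.apply_symm_apply y

section Legendre

variable {f g : ℝ → ℝ}

/-- Fenchel-Young attained at `g y`. -/
lemma legendre_eq (hf : CondF f) (hg' : ∀ y, deriv f (g y) = y) (y : ℝ) :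
    legendre f y = y * g y - f (g y) := by
  have hub : ∀ x, y * x - f x ≤ y * g y - f (g y) := by
    intro x
    have := tangent hf (g y) x
    rw [hg'] at this
    nlinarith
  refine le_antisymm (csSup_le (Set.range_nonempty _) ?_) ?_
  · rintro z ⟨x, rfl⟩; exact hub x
  · exact le_csSup ⟨y * g y - f (g y), by rintro z ⟨x, rfl⟩; exact hub x⟩ ⟨g y, rfl⟩

lemma legendre_ge (hf : CondF f) (hg' : ∀ y, deriv f (g y) = y) (y x : ℝ) :
    y * x - f x ≤ legendre f y := by
  rw [legendre_eq hf hg']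
  have := tangent hf (g y) x
  rw [hg'] at this
  nlinarith

/-- squeezed difference bounds. -/
lemma legendre_diff_le (hf : CondF f) (hg' : ∀ y, deriv f (g y) = y)
    {s t : ℝ} (hst : s ≤ t) :
    g s * (t - s) ≤ legendre f t - legendre f s ∧
      legendre f t - legendre f s ≤ g t * (t - s) := by
  constructor
  · have h1 : t * g s - f (g s) ≤ legendre f t := legendre_ge hf hg' t (g s)
    have h2 : legendre f s = s * g s - f (g s) := legendre_eq hf hg' s
    nlinarith
  · have h1 : s * g t - f (g t) ≤ legendre f s := legendre_ge hf hg' s (g t)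
    have h2 : legendre f t = t * g t - f (g t) := legendre_eq hf hg' t
    nlinarith

lemma legendre_hasDerivAt (hf : CondF f) (hgc : Continuous g) (hgm : Monotone g)
    (hg' : ∀ y, deriv f (g y) = y) (y : ℝ) :
    HasDerivAt (legendre f) (g y) y := by
  rw [hasDerivAt_iff_tendsto_slope]
  have hsq : ∀ z : ℝ, z ≠ y →
      g (min y z) ≤ slope (legendre f) y z ∧ slope (legendre f) y z ≤ g (max y z) := by
    intro z hz
    rcases lt_or_gt_of_ne hz with h | h
    · have hb := legendre_diff_le hf hg' (le_of_lt h : z ≤ y)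
      have hd : 0 < y - z := by linarith
      have hs : slope (legendre f) y z = (legendre f y - legendre f z) / (y - z) := by
        rw [slope_comm, slope_def_field]
      rw [min_eq_right (le_of_lt h), max_eq_left (le_of_lt h), hs]
      constructor
      · rw [le_div_iff₀ hd]; exact hb.1
      · rw [div_le_iff₀ hd]; exact hb.2
    · have hb := legendre_diff_le hf hg' (le_of_lt h : y ≤ z)
      have hd : 0 < z - y := by linarith
      have hs : slope (legendre f) y z = (legendre f z - legendre f y) / (z - y) := by
        rw [slope_def_field]
      rw [min_eq_left (le_of_lt h), max_eq_right (le_of_lt h), hs]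
      constructor
      · rw [le_div_iff₀ hd]; exact hb.1
      · rw [div_le_iff₀ hd]; exact hb.2
  have hmin : Tendsto (fun z => g (min y z)) (nhdsWithin y {y}ᶜ) (nhds (g y)) := by
    have : Tendsto (fun z => g (min y z)) (nhds y) (nhds (g (min y y))) :=
      (hgc.comp (continuous_const.min continuous_id)).tendsto y
    rw [min_self] at this
    exact this.mono_left nhdsWithin_le_nhds
  have hmax : Tendsto (fun z => g (max y z)) (nhdsWithin y {y}ᶜ) (nhds (g y)) := by
    have : Tendsto (fun z => g (max y z)) (nhds y) (nhds (g (max y y))) :=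
      (hgc.comp (continuous_const.max continuous_id)).tendsto y
    rw [max_self] at this
    exact this.mono_left nhdsWithin_le_nhds
  refine tendsto_of_tendsto_of_tendsto_of_le_of_le' hmin hmax ?_ ?_
  · filter_upwards [self_mem_nhdsWithin] with z hz using (hsq z hz).1
  · filter_upwards [self_mem_nhdsWithin] with z hz using (hsq z hz).2

lemma legendre_cont (hf : CondF f) (hgc : Continuous g) (hgm : Monotone g)
    (hg' : ∀ y, deriv f (g y) = y) : Continuous (legendre f) := by
  have : Differentiable ℝ (legendre f) :=
    fun y => (legendre_hasDerivAt hf hgc hgm hg' y).differentiableAt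
  exact this.continuous

/-- scaled FTC for the legendre transform. -/
lemma legendre_integral (hf : CondF f) (hgc : Continuous g) (hgm : Monotone g)
    (hg' : ∀ y, deriv f (g y) = y) {T : ℝ} (hT : 0 < T) (c a b : ℝ) :
    ∫ s in a..b, g ((s - c) / T) =
      T * legendre f ((b - c) / T) - T * legendre f ((a - c) / T) := by
  have hG : ∀ s : ℝ, HasDerivAt (fun u => T * legendre f ((u - c) / T)) (g ((s - c) / T)) s := by
    intro s
    have h1 : HasDerivAt (fun u : ℝ => (u - c) / T) (1 / T) s := by
      simpa using ((hasDerivAt_id s).sub_const c).div_const T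
    have h2 := (legendre_hasDerivAt hf hgc hgm hg' ((s - c) / T)).comp s h1
    have h3 := h2.const_mul T
    have : T * (g ((s - c) / T) * (1 / T)) = g ((s - c) / T) := by
      field_simp
    rwa [this] at h3
  exact intervalIntegral.integral_eq_sub_of_hasDerivAt (fun s _ => hG s)
    ((hgc.comp ((continuous_id.sub continuous_const).div_const T)).intervalIntegrable a b)

end Legendre

/-- bundled hypotheses -/
structure Setup (f g uT : ℝ → ℝ) (T m M : ℝ) : Prop where
  hf : CondF f
  hT : 0 < T
  hgc : Continuous g
  hgm : StrictMono g
  hg : ∀ x, g (deriv f x) = x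
  hg' : ∀ y, deriv f (g y) = y
  huT : Measurable uT
  hO : Oleinik f T uT
  hmem : ∀ x, uT x ∈ Set.Icc m M
  hmM : m ≤ M

section Core

variable {f g uT : ℝ → ℝ} {T m M : ℝ} (S : Setup f g uT T m M) (xc : ℝ)

include S

/-- the backward characteristic foot point. -/
noncomputable def xiC (f : ℝ → ℝ) (T : ℝ) (uT : ℝ → ℝ) (y : ℝ) : ℝ :=
  y - T * deriv f (uT y)

lemma uT_intInt (a b : ℝ) : IntervalIntegrable uT volume a b := by
  have : ∀ s : ℝ, ‖uT s‖ ≤ max |m| |M| := by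
    intro s
    rcases S.hmem s with ⟨h1, h2⟩
    rw [Real.norm_eq_abs, abs_le]
    constructor
    · calc -(max |m| |M|) ≤ -|m| := by simp
        _ ≤ m := neg_abs_le m
        _ ≤ uT s := h1
    · exact le_trans (le_trans h2 (le_abs_self M)) (le_max_right _ _)
  constructor <;>
  · refine Integrable.mono' (integrable_const (max |m| |M|)) (S.huT.aestronglyMeasurable.restrict) ?_
    exact Eventually.of_forall (fun s => this s)

lemma UT_diff (a b : ℝ) : UT uT xc b - UT uT xc a = ∫ s in a..b, uT s := by
  unfold UT
  rw [← intervalIntegral.integral_add_adjacent_intervals (uT_intInt S xc a) (uT_intInt S a b)]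
  ring

/-- pointwise characteristic comparison, right side -/
lemma xiC_self (x : ℝ) : (x - xiC f T uT x) / T = deriv f (uT x) := by
  rw [xiC]
  rw [sub_sub_cancel]
  exact mul_div_cancel_left₀ _ (ne_of_gt S.hT)

lemma point_ge {x s : ℝ} (hxs : x ≤ s) : uT s ≤ g ((s - xiC f T uT x) / T) := by
  rcases eq_or_lt_of_le hxs with h | h
  · rw [← h, xiC_self S, S.hg]
  · have hol := S.hO x (s - x) (by linarith)
    rw [show x + (s - x) = s by ring] at hol
    have harg : deriv f (uT s) ≤ (s - xiC f T uT x) / T := by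
      rw [xiC, le_div_iff₀ S.hT]
      rw [le_div_iff₀ S.hT] at hol
      have hT' : (0:ℝ) < T := S.hT
      nlinarith
    calc uT s = g (deriv f (uT s)) := (S.hg _).symm
      _ ≤ g ((s - xiC f T uT x) / T) := S.hgm.monotone harg

/-- pointwise characteristic comparison, left side -/
lemma point_le {x s : ℝ} (hxs : s ≤ x) : g ((s - xiC f T uT x) / T) ≤ uT s := by
  rcases eq_or_lt_of_le hxs with h | h
  · rw [h, xiC_self S, S.hg]
  · have hol := S.hO s (x - s) (by linarith)
    rw [show s + (x - s) = x by ring] at hol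
    have harg : (s - xiC f T uT x) / T ≤ deriv f (uT s) := by
      rw [xiC, div_le_iff₀ S.hT]
      rw [le_div_iff₀ S.hT] at hol
      have hT' : (0:ℝ) < T := S.hT
      nlinarith
    calc g ((s - xiC f T uT x) / T) ≤ g (deriv f (uT s)) := S.hgm.monotone harg
      _ = uT s := S.hg _

/-- continuity of the shifted g integrand -/
lemma gshift_cont (c : ℝ) : Continuous (fun s : ℝ => g ((s - c) / T)) :=
  S.hgc.comp ((continuous_id.sub continuous_const).div_const T)

/-- THE key inequality: the Hopf-Lax backward envelope is maximized along characteristics. -/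
lemma key_ineq (x η : ℝ) :
    UT uT xc η - T * legendre f ((η - xiC f T uT x) / T) ≤
      UT uT xc x - T * legendre f ((x - xiC f T uT x) / T) := by
  have hint := legendre_integral S.hf S.hgc S.hgm.monotone S.hg' S.hT (xiC f T uT x) x η
  have hUT := UT_diff S xc x η
  -- suffices: UT η - UT x ≤ ∫_x^η g((s - ξ)/T)
  have main : UT uT xc η - UT uT xc x ≤ ∫ s in x..η, g ((s - xiC f T uT x) / T) := by
    rcases le_total x η with h | h
    · rw [hUT]
      refine intervalIntegral.integral_mono_on h (uT_intInt S x η)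
        (((gshift_cont S _)).intervalIntegrable x η) ?_
      intro s hs
      exact point_ge S hs.1
    · rw [hUT]
      rw [intervalIntegral.integral_symm η x, intervalIntegral.integral_symm η x
        (f := fun s => g ((s - xiC f T uT x) / T))]
      have : ∫ s in η..x, g ((s - xiC f T uT x) / T) ≤ ∫ s in η..x, uT s := by
        refine intervalIntegral.integral_mono_on h
          (((gshift_cont S _)).intervalIntegrable η x) (uT_intInt S η x) ?_
        intro s hs
        exact point_le S hs.2
      linarith
  linarith [hint, main]

end Core

section Flat

variable {f g uT : ℝ → ℝ} {T m M : ℝ} (S : Setup f g uT T m M) (xc : ℝ)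

noncomputable def KB (m M : ℝ) : ℝ := max |m| |M|

noncomputable def CF (f : ℝ → ℝ) (m M : ℝ) : ℝ :=
  max (f (KB m M + 1)) (f (-(KB m M + 1)))

include S

lemma legendre_lin_bound (c z : ℝ) :
    c * |z| - max (f c) (f (-c)) ≤ legendre f z := by
  rcases le_or_gt 0 z with h | h
  · have := legendre_ge S.hf S.hg' z c
    rw [abs_of_nonneg h]
    have : f c ≤ max (f c) (f (-c)) := le_max_left _ _
    nlinarith [legendre_ge S.hf S.hg' z c]
  · have := legendre_ge S.hf S.hg' z (-c)
    rw [abs_of_neg h]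
    have h2 : f (-c) ≤ max (f c) (f (-c)) := le_max_right _ _
    nlinarith [legendre_ge S.hf S.hg' z (-c)]

lemma uT_norm_le (s : ℝ) : ‖uT s‖ ≤ KB m M := by
  rcases S.hmem s with ⟨h1, h2⟩
  rw [Real.norm_eq_abs, abs_le, KB]
  refine ⟨?_, le_trans (le_trans h2 (le_abs_self M)) (le_max_right _ _)⟩
  calc -(max |m| |M|) ≤ -|m| := by simp
    _ ≤ m := neg_abs_le m
    _ ≤ uT s := h1

lemma UT_dist (a b : ℝ) : |UT uT xc b - UT uT xc a| ≤ KB m M * |b - a| := by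
  rw [UT_diff S xc a b]
  have := intervalIntegral.norm_integral_le_of_norm_le_const
    (C := KB m M) (f := uT) (a := a) (b := b)
    (fun s _ => uT_norm_le S s)
  simpa [Real.norm_eq_abs] using this

lemma UT_slope {a d : ℝ} (hd : 0 ≤ d) :
    m * d ≤ UT uT xc (a + d) - UT uT xc a ∧ UT uT xc (a + d) - UT uT xc a ≤ M * d := by
  rw [UT_diff S xc a (a + d)]
  constructor
  · have : ∫ s in a..(a+d), (fun _ => m) s ≤ ∫ s in a..(a+d), uT s :=
      intervalIntegral.integral_mono_on (by linarith) (intervalIntegrable_const)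
        (uT_intInt S a (a+d)) (fun s _ => (S.hmem s).1)
    simpa [mul_comm] using this
  · have : ∫ s in a..(a+d), uT s ≤ ∫ s in a..(a+d), (fun _ => M) s :=
      intervalIntegral.integral_mono_on (by linarith) (uT_intInt S a (a+d))
        (intervalIntegrable_const) (fun s _ => (S.hmem s).2)
    simpa [mul_comm] using this

/-- every term in the `Uflat` sup is uniformly dominated. -/
lemma flat_term_le (x η : ℝ) :
    UT uT xc η - T * legendre f ((η - x) / T) ≤ UT uT xc x + T * CF f m M := by
  have h1 : UT uT xc η - UT uT xc x ≤ KB m M * |η - x| := by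
    have := UT_dist S xc x η
    have h := le_abs_self (UT uT xc η - UT uT xc x)
    linarith
  have h2 : (KB m M + 1) * |(η - x) / T| - CF f m M ≤ legendre f ((η - x) / T) := by
    have := legendre_lin_bound S (KB m M + 1) ((η - x) / T)
    rwa [CF]
  have h3 : |(η - x) / T| = |η - x| / T := by
    rw [abs_div, abs_of_pos S.hT]
  have hT := S.hT
  have h4 : T * legendre f ((η - x) / T) ≥ (KB m M + 1) * |η - x| - T * CF f m M := by
    rw [h3] at h2
    have := mul_le_mul_of_nonneg_left h2 (le_of_lt hT)
    calc T * legendre f ((η - x) / T) ≥ T * ((KB m M + 1) * (|η - x| / T) - CF f m M) := this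
      _ = (KB m M + 1) * |η - x| - T * CF f m M := by field_simp
  nlinarith [abs_nonneg (η - x)]

lemma flat_bddAbove (x : ℝ) :
    BddAbove (Set.range fun η => UT uT xc η - T * legendre f ((η - x) / T)) := by
  refine ⟨UT uT xc x + T * CF f m M, ?_⟩
  rintro z ⟨η, rfl⟩
  exact flat_term_le S xc x η

lemma Uflat_ge_term (x η : ℝ) :
    UT uT xc η - T * legendre f ((η - x) / T) ≤ Uflat f T uT xc x :=
  le_csSup (flat_bddAbove S xc x) ⟨η, rfl⟩

lemma Uflat_le (x : ℝ) : Uflat f T uT xc x ≤ UT uT xc x + T * CF f m M :=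
  csSup_le (Set.range_nonempty _) (by rintro z ⟨η, rfl⟩; exact flat_term_le S xc x η)

/-- value of `Uflat` at a characteristic foot point. -/
lemma Uflat_at_xiC (y : ℝ) :
    Uflat f T uT xc (xiC f T uT y) =
      UT uT xc y - T * legendre f ((y - xiC f T uT y) / T) := by
  refine le_antisymm (csSup_le (Set.range_nonempty _) ?_) (Uflat_ge_term S xc _ y)
  rintro z ⟨η, rfl⟩
  exact key_ineq S xc y η

/-- slope bounds for Uflat. -/
lemma Uflat_slope {x d : ℝ} (hd : 0 ≤ d) :
    m * d ≤ Uflat f T uT xc (x + d) - Uflat f T uT xc x ∧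
      Uflat f T uT xc (x + d) - Uflat f T uT xc x ≤ M * d := by
  constructor
  · have h : Uflat f T uT xc x ≤ Uflat f T uT xc (x + d) - m * d := by
      refine csSup_le (Set.range_nonempty _) ?_
      rintro z ⟨η, rfl⟩
      have h1 : UT uT xc (η + d) - T * legendre f (((η + d) - (x + d)) / T) ≤
          Uflat f T uT xc (x + d) := Uflat_ge_term S xc (x + d) (η + d)
      have h2 : m * d ≤ UT uT xc (η + d) - UT uT xc η := (UT_slope S xc hd).1
      have h3 : ((η + d) - (x + d)) / T = (η - x) / T := by ring_nf
      rw [h3] at h1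
      linarith
    linarith
  · have h : Uflat f T uT xc (x + d) ≤ Uflat f T uT xc x + M * d := by
      refine csSup_le (Set.range_nonempty _) ?_
      rintro z ⟨η, rfl⟩
      have h1 : UT uT xc (η - d) - T * legendre f (((η - d) - x) / T) ≤
          Uflat f T uT xc x := Uflat_ge_term S xc x (η - d)
      have h2 : UT uT xc η - UT uT xc (η - d) ≤ M * d := by
        have := (UT_slope S xc (a := η - d) hd).2
        rw [sub_add_cancel] at this
        linarith
      have h3 : ((η - d) - x) / T = (η - (x + d)) / T := by ring_nf
      rw [h3] at h1
      linarith
    linarith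

end Flat

/-- two-sided slope bounds -/
def SlopeIn (m M : ℝ) (U : ℝ → ℝ) : Prop :=
  ∀ x d : ℝ, 0 ≤ d → m * d ≤ U (x + d) - U x ∧ U (x + d) - U x ≤ M * d

section Slope

variable {m M : ℝ} {U : ℝ → ℝ}

lemma SlopeIn.abs_le (h : SlopeIn m M U) {a b : ℝ} :
    |U b - U a| ≤ KB m M * |b - a| := by
  wlog hab : a ≤ b generalizing a b
  · have h2 := this (le_of_not_ge hab)
    calc |U b - U a| = |U a - U b| := abs_sub_comm _ _
      _ ≤ KB m M * |a - b| := h2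
      _ = KB m M * |b - a| := by rw [abs_sub_comm]
  obtain ⟨h1, h2⟩ := h a (b - a) (by linarith)
  rw [add_sub_cancel] at h1 h2
  rw [abs_of_nonneg (by linarith : (0:ℝ) ≤ b - a), _root_.abs_le]
  have hm : -|m| ≤ m := neg_abs_le m
  have hM : M ≤ |M| := le_abs_self M
  have k1 : |m| ≤ KB m M := le_max_left _ _
  have k2 : |M| ≤ KB m M := le_max_right _ _
  constructor <;> nlinarith [abs_nonneg m, abs_nonneg M]

lemma SlopeIn.lipschitz (h : SlopeIn m M U) :
    LipschitzWith (Real.toNNReal (KB m M)) U := by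
  have hKB : 0 ≤ KB m M := le_trans (abs_nonneg m) (le_max_left _ _)
  refine LipschitzWith.of_dist_le_mul fun a b => ?_
  rw [Real.dist_eq, Real.dist_eq, Real.coe_toNNReal _ hKB]
  exact h.abs_le

lemma SlopeIn.deriv_mem (h : SlopeIn m M U) :
    ∀ᵐ x ∂volume, deriv U x ∈ Set.Icc m M := by
  filter_upwards [h.lipschitz.ae_differentiableAt] with x hx
  have hd := hx.hasDerivAt
  rw [hasDerivAt_iff_tendsto_slope] at hd
  have hd' : Tendsto (slope U x) (nhdsWithin x (Set.Ioi x)) (nhds (deriv U x)) :=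
    hd.mono_left (nhdsWithin_mono x (fun z hz => ne_of_gt hz))
  have hev1 : ∀ᶠ z in nhdsWithin x (Set.Ioi x), m ≤ slope U x z := by
    filter_upwards [self_mem_nhdsWithin] with z hz
    have hz' : (0:ℝ) < z - x := by simpa using hz
    obtain ⟨h1, _⟩ := h x (z - x) (le_of_lt hz')
    rw [add_sub_cancel] at h1
    rw [slope_def_field, le_div_iff₀ hz']
    linarith
  have hev2 : ∀ᶠ z in nhdsWithin x (Set.Ioi x), slope U x z ≤ M := by
    filter_upwards [self_mem_nhdsWithin] with z hz
    have hz' : (0:ℝ) < z - x := by simpa using hz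
    obtain ⟨_, h2⟩ := h x (z - x) (le_of_lt hz')
    rw [add_sub_cancel] at h2
    rw [slope_def_field, div_le_iff₀ hz']
    linarith
  exact ⟨ge_of_tendsto hd' hev1, le_of_tendsto hd' hev2⟩

end Slope

section Hopf

variable {f g uT : ℝ → ℝ} {T m M : ℝ} (S : Setup f g uT T m M) (xc : ℝ)

noncomputable def CK (f : ℝ → ℝ) (K : ℝ) : ℝ := max (f (K + 1)) (f (-(K + 1)))

include S

lemma hopf_term_ge {U : ℝ → ℝ} {K : NNReal} (hL : LipschitzWith K U) (x ξ : ℝ) :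
    U x + |x - ξ| - T * CK f K ≤ U ξ + T * legendre f ((x - ξ) / T) := by
  have h1 : |U x - U ξ| ≤ (K : ℝ) * |x - ξ| := by
    have := hL.dist_le_mul x ξ
    rwa [Real.dist_eq, Real.dist_eq] at this
  have h2 : ((K : ℝ) + 1) * |(x - ξ) / T| - CK f (K : ℝ) ≤ legendre f ((x - ξ) / T) := by
    have := legendre_lin_bound S ((K : ℝ) + 1) ((x - ξ) / T)
    rwa [CK]
  have h3 : |(x - ξ) / T| = |x - ξ| / T := by rw [abs_div, abs_of_pos S.hT]
  have hT := S.hT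
  have h4 : T * legendre f ((x - ξ) / T) ≥ ((K : ℝ) + 1) * |x - ξ| - T * CK f (K : ℝ) := by
    rw [h3] at h2
    have := mul_le_mul_of_nonneg_left h2 (le_of_lt hT)
    calc T * legendre f ((x - ξ) / T)
        ≥ T * (((K : ℝ) + 1) * (|x - ξ| / T) - CK f (K : ℝ)) := this
      _ = ((K : ℝ) + 1) * |x - ξ| - T * CK f (K : ℝ) := by field_simp
  have h5 : U x - U ξ ≤ (K : ℝ) * |x - ξ| := le_trans (le_abs_self _) h1
  linarith

lemma hopf_bddBelow {U : ℝ → ℝ} {K : NNReal} (hL : LipschitzWith K U) (x : ℝ) :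
    BddBelow (Set.range fun ξ => U ξ + T * legendre f ((x - ξ) / T)) := by
  refine ⟨U x - T * CK f K, ?_⟩
  rintro z ⟨ξ, rfl⟩
  have := hopf_term_ge S hL x ξ
  have := abs_nonneg (x - ξ)
  linarith

/-- `Uflat` is below any `U` evolving into `UT`. -/
lemma Uflat_le_of_hopf {U : ℝ → ℝ} {K : NNReal} (hL : LipschitzWith K U)
    (hHL : ∀ x, HopfLax f T U x = UT uT xc x) (x : ℝ) :
    Uflat f T uT xc x ≤ U x := by
  refine csSup_le (Set.range_nonempty _) ?_
  rintro z ⟨η, rfl⟩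
  have h1 : UT uT xc η ≤ U x + T * legendre f ((η - x) / T) := by
    rw [← hHL η]
    exact csInf_le (hopf_bddBelow S hL η) ⟨x, rfl⟩
  linarith

/-- attainment of the Hopf–Lax infimum. -/
lemma hopf_attain {U : ℝ → ℝ} {K : NNReal} (hL : LipschitzWith K U)
    (hHL : ∀ x, HopfLax f T U x = UT uT xc x) (x : ℝ) :
    ∃ ξ, U ξ + T * legendre f ((x - ξ) / T) = UT uT xc x := by
  have hcont : Continuous (fun ξ : ℝ => U ξ + T * legendre f ((x - ξ) / T)) := by
    apply hL.continuous.add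
    exact (continuous_const.mul ((legendre_cont S.hf S.hgc S.hgm.monotone S.hg').comp
      ((continuous_const.sub continuous_id).div_const T)))
  set R : ℝ := |T * CK f K| + T * |legendre f 0| + 1 with hR
  have hR0 : 0 < R := by
    have h1 : 0 ≤ T * |legendre f 0| := mul_nonneg (le_of_lt S.hT) (abs_nonneg _)
    have h2 : 0 ≤ |T * CK f K| := abs_nonneg _
    linarith
  clear_value R
  obtain ⟨ξ', hξ'mem, hξ'min⟩ := (isCompact_Icc (a := x - R) (b := x + R)).exists_isMinOn
    ⟨x, by constructor <;> linarith⟩ hcont.continuousOn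
  have hxmem : x ∈ Set.Icc (x - R) (x + R) := by constructor <;> linarith
  have hglobal : ∀ ξ, U ξ' + T * legendre f ((x - ξ') / T) ≤
      U ξ + T * legendre f ((x - ξ) / T) := by
    intro ξ
    rcases le_or_gt |x - ξ| R with hc | hc
    · refine hξ'min ?_
      rw [_root_.abs_le] at hc
      constructor <;> [linarith [hc.2]; linarith [hc.1]]
    · have h1 : U x + |x - ξ| - T * CK f K ≤ U ξ + T * legendre f ((x - ξ) / T) :=
        hopf_term_ge S hL x ξ
      have h2 : U ξ' + T * legendre f ((x - ξ') / T) ≤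
          U x + T * legendre f ((x - x) / T) := hξ'min hxmem
      have h4 : T * legendre f ((x - x) / T) ≤ T * |legendre f 0| := by
        rw [sub_self, zero_div]
        exact mul_le_mul_of_nonneg_left (le_abs_self _) (le_of_lt S.hT)
      have h5 : T * CK f K ≤ |T * CK f K| := le_abs_self _
      rw [hR] at hc
      linarith
  refine ⟨ξ', ?_⟩
  rw [← hHL x]
  refine le_antisymm ?_ (csInf_le (hopf_bddBelow S hL x) ⟨ξ', rfl⟩)
  exact le_csInf (Set.range_nonempty _) (by rintro z ⟨ξ, rfl⟩; exact hglobal ξ)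

/-- the Hopf–Lax evolution of `Uflat` is `UT`. -/
lemma hopfLax_flat (x : ℝ) : HopfLax f T (Uflat f T uT xc) x = UT uT xc x := by
  have hge : ∀ ξ, UT uT xc x ≤ Uflat f T uT xc ξ + T * legendre f ((x - ξ) / T) := by
    intro ξ
    have := Uflat_ge_term S xc ξ x
    linarith
  refine le_antisymm ?_ (le_csInf (Set.range_nonempty _) (by rintro z ⟨ξ, rfl⟩; exact hge ξ))
  have hmem : Uflat f T uT xc (xiC f T uT x) +
      T * legendre f ((x - xiC f T uT x) / T) = UT uT xc x := by
    rw [Uflat_at_xiC S xc x]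
    ring
  rw [← hmem]
  exact csInf_le ⟨UT uT xc x, by rintro z ⟨ξ, rfl⟩; exact hge ξ⟩ ⟨xiC f T uT x, rfl⟩

end Hopf

section Force

variable {f g uT : ℝ → ℝ} {T m M : ℝ} (S : Setup f g uT T m M) (xc : ℝ)

include S

/-- contact points for `y'` lie left of the characteristic point of `y > y'`. -/
lemma ordering_le {y' y ξ' : ℝ} (hy : y' < y)
    (hc : UT uT xc y - T * legendre f ((y - ξ') / T) ≤
      UT uT xc y' - T * legendre f ((y' - ξ') / T)) :
    ξ' ≤ xiC f T uT y := by
  by_contra hlt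
  push_neg at hlt
  have hint1 := legendre_integral S.hf S.hgc S.hgm.monotone S.hg' S.hT ξ' y' y
  have h1 : UT uT xc y - UT uT xc y' ≤ ∫ s in y'..y, g ((s - ξ') / T) := by
    rw [hint1]; linarith
  have h2 : ∫ s in y'..y, g ((s - xiC f T uT y) / T) ≤ UT uT xc y - UT uT xc y' := by
    rw [UT_diff S xc y' y]
    exact intervalIntegral.integral_mono_on (le_of_lt hy)
      ((gshift_cont S _).intervalIntegrable _ _) (uT_intInt S _ _)
      (fun s hs => point_le S hs.2)
  have hpos : 0 < ∫ s in y'..y,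
      (g ((s - xiC f T uT y) / T) - g ((s - ξ') / T)) := by
    refine intervalIntegral.intervalIntegral_pos_of_pos
      (((gshift_cont S _).sub (gshift_cont S _)).intervalIntegrable _ _) ?_ hy
    intro s
    have harg : (s - ξ') / T < (s - xiC f T uT y) / T :=
      div_lt_div_of_pos_right (by linarith) S.hT
    exact sub_pos.mpr (S.hgm harg)
  rw [intervalIntegral.integral_sub ((gshift_cont S _).intervalIntegrable _ _)
    ((gshift_cont S _).intervalIntegrable _ _)] at hpos
  linarith

end Force

section Force2

variable {f g uT : ℝ → ℝ} {T m M : ℝ} (S : Setup f g uT T m M) (xc : ℝ)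

include S

/-- contact points for `y'` lie right of the characteristic point of `y < y'`. -/
lemma ordering_ge {y y' ξ' : ℝ} (hy : y < y')
    (hc : UT uT xc y - T * legendre f ((y - ξ') / T) ≤
      UT uT xc y' - T * legendre f ((y' - ξ') / T)) :
    xiC f T uT y ≤ ξ' := by
  by_contra hlt
  push_neg at hlt
  have hint1 := legendre_integral S.hf S.hgc S.hgm.monotone S.hg' S.hT ξ' y y'
  have h1 : ∫ s in y..y', g ((s - ξ') / T) ≤ UT uT xc y' - UT uT xc y := by
    rw [hint1]; linarith
  have h2 : UT uT xc y' - UT uT xc y ≤ ∫ s in y..y', g ((s - xiC f T uT y) / T) := by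
    rw [UT_diff S xc y y']
    exact intervalIntegral.integral_mono_on (le_of_lt hy)
      (uT_intInt S _ _) ((gshift_cont S _).intervalIntegrable _ _)
      (fun s hs => point_ge S hs.1)
  have hpos : 0 < ∫ s in y..y',
      (g ((s - ξ') / T) - g ((s - xiC f T uT y) / T)) := by
    refine intervalIntegral.intervalIntegral_pos_of_pos
      (((gshift_cont S _).sub (gshift_cont S _)).intervalIntegrable _ _) ?_ hy
    intro s
    have harg : (s - xiC f T uT y) / T < (s - ξ') / T :=
      div_lt_div_of_pos_right (by linarith) S.hT
    exact sub_pos.mpr (S.hgm harg)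
  rw [intervalIntegral.integral_sub ((gshift_cont S _).intervalIntegrable _ _)
    ((gshift_cont S _).intervalIntegrable _ _)] at hpos
  linarith

/-- left continuity of the characteristic foot point. -/
lemma xiC_left_cts (hlc : ∀ x, Tendsto uT (nhdsWithin x (Set.Iio x)) (nhds (uT x))) (y : ℝ) :
    Tendsto (xiC f T uT) (nhdsWithin y (Set.Iio y)) (nhds (xiC f T uT y)) := by
  unfold xiC
  exact (tendsto_id.mono_left nhdsWithin_le_nhds).sub
    (tendsto_const_nhds.mul (((deriv_cont S.hf).tendsto (uT y)).comp (hlc y)))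

/-- THE forcing lemma: any admissible `U` agrees with `Uflat` at characteristic points. -/
lemma forced {U : ℝ → ℝ} {K : NNReal} (hL : LipschitzWith K U)
    (hHL : ∀ x, HopfLax f T U x = UT uT xc x)
    (hlc : ∀ x, Tendsto uT (nhdsWithin x (Set.Iio x)) (nhds (uT x))) (y : ℝ) :
    U (xiC f T uT y) = Uflat f T uT xc (xiC f T uT y) := by
  set b := xiC f T uT y with hb
  have hflat_slope : SlopeIn m M (Uflat f T uT xc) := fun x d hd => Uflat_slope S xc hd
  have hflat_lip := hflat_slope.lipschitz
  have hge : Uflat f T uT xc b ≤ U b := Uflat_le_of_hopf S xc hL hHL b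
  have key : ∀ ε : ℝ, 0 < ε → U b - Uflat f T uT xc b ≤ ((K : ℝ) + KB m M) * ε := by
    intro ε hε
    -- find a window
    have hxi := xiC_left_cts S (hlc := hlc) y
    have hev : ∀ᶠ z in nhdsWithin y (Set.Iio y), dist (xiC f T uT z) b < ε :=
      hxi (Metric.ball_mem_nhds _ hε)
    obtain ⟨a, ha, hsub⟩ := mem_nhdsLT_iff_exists_Ioo_subset.mp hev
    -- pick y'' < y' < y inside (a, y)
    set y' : ℝ := (max a (y - 1) + y) / 2 with hy'
    set y'' : ℝ := (max a (y - 1) + y') / 2 with hy''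
    have hay : max a (y - 1) < y := max_lt ha (by linarith)
    have hy'mem : max a (y - 1) < y' ∧ y' < y := by constructor <;> (rw [hy']; linarith)
    have hy''mem : max a (y - 1) < y'' ∧ y'' < y' := by
      constructor <;> (rw [hy'']; linarith [hy'mem.1])
    have hy'Ioo : y' ∈ Set.Ioo a y := ⟨lt_of_le_of_lt (le_max_left _ _) hy'mem.1, hy'mem.2⟩
    have hy''Ioo : y'' ∈ Set.Ioo a y :=
      ⟨lt_of_le_of_lt (le_max_left _ _) hy''mem.1, lt_trans hy''mem.2 hy'mem.2⟩
    -- touching point for U at y'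
    obtain ⟨ξ₀, hξ₀⟩ := hopf_attain S xc hL hHL y'
    have htouch : U ξ₀ = UT uT xc y' - T * legendre f ((y' - ξ₀) / T) := by linarith
    have hU_ge_flat : Uflat f T uT xc ξ₀ ≤ U ξ₀ := Uflat_le_of_hopf S xc hL hHL ξ₀
    have hflat_ge : U ξ₀ ≤ Uflat f T uT xc ξ₀ := by
      rw [htouch]; exact Uflat_ge_term S xc ξ₀ y'
    have heq : U ξ₀ = Uflat f T uT xc ξ₀ := le_antisymm hflat_ge hU_ge_flat
    -- contact inequality for all z
    have hcontact : ∀ z, UT uT xc z - T * legendre f ((z - ξ₀) / T) ≤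
        UT uT xc y' - T * legendre f ((y' - ξ₀) / T) := by
      intro z
      have h1 := Uflat_ge_term S xc ξ₀ z
      rw [← heq, htouch] at h1
      exact h1
    -- ordering
    have hle : ξ₀ ≤ b := ordering_le S xc hy'mem.2 (hcontact y)
    have hge2 : xiC f T uT y'' ≤ ξ₀ := ordering_ge S xc hy''mem.2 (hcontact y'')
    have hclose : dist (xiC f T uT y'') b < ε := hsub hy''Ioo
    have hdist : |b - ξ₀| ≤ ε := by
      rw [Real.dist_eq] at hclose
      rw [abs_le]
      have := abs_lt.mp hclose
      constructor <;> linarith [this.1, this.2]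
    -- conclude
    have hU_d : |U b - U ξ₀| ≤ (K : ℝ) * |b - ξ₀| := by
      have := hL.dist_le_mul b ξ₀
      rwa [Real.dist_eq, Real.dist_eq] at this
    have hF_d : |Uflat f T uT xc ξ₀ - Uflat f T uT xc b| ≤ KB m M * |ξ₀ - b| :=
      hflat_slope.abs_le
    have hK0 : (0:ℝ) ≤ (K : ℝ) := K.coe_nonneg
    have hKB0 : (0:ℝ) ≤ KB m M := le_trans (abs_nonneg m) (le_max_left _ _)
    have e1 : U b - U ξ₀ ≤ (K : ℝ) * ε := by
      have := le_trans (le_abs_self _) hU_d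
      nlinarith
    have e2 : Uflat f T uT xc ξ₀ - Uflat f T uT xc b ≤ KB m M * ε := by
      have := le_trans (le_abs_self _) hF_d
      have habs : |ξ₀ - b| = |b - ξ₀| := abs_sub_comm _ _
      nlinarith [hF_d, abs_sub_comm ξ₀ b]
    have := heq
    nlinarith
  -- finish: U b = Uflat b
  refine le_antisymm ?_ hge
  by_contra hlt
  push_neg at hlt
  set D := U b - Uflat f T uT xc b with hD
  have hD0 : 0 < D := by rw [hD]; linarith
  have hK0 : (0:ℝ) ≤ (K : ℝ) + KB m M := by
    have := K.coe_nonneg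
    have : (0:ℝ) ≤ KB m M := le_trans (abs_nonneg m) (le_max_left _ _)
    positivity
  have hkey := key (D / (2 * ((K : ℝ) + KB m M) + 2)) (by positivity)
  have h1 : ((K : ℝ) + KB m M) / (2 * ((K : ℝ) + KB m M) + 2) < 1 := by
    rw [div_lt_one (by positivity)]
    linarith
  have hlarge : ((K : ℝ) + KB m M) * (D / (2 * ((K : ℝ) + KB m M) + 2)) < D := by
    calc ((K : ℝ) + KB m M) * (D / (2 * ((K : ℝ) + KB m M) + 2))
        = D * (((K : ℝ) + KB m M) / (2 * ((K : ℝ) + KB m M) + 2)) := by ring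
      _ < D * 1 := by exact mul_lt_mul_of_pos_left h1 hD0
      _ = D := by ring
  linarith

end Force2

section FTC

variable {U : ℝ → ℝ} {K : NNReal}

/-- right-sided averages converge to the value, along `1/(n+1)`. -/
lemma avg_tendsto (hUc : Continuous U) (c : ℝ) :
    Tendsto (fun n : ℕ => (∫ s in c..(c + 1/((n:ℝ)+1)), U s) * ((n:ℝ)+1)) atTop
      (nhds (U c)) := by
  set G : ℝ → ℝ := fun t => ∫ s in c..t, U s with hG
  have hD : HasDerivAt G (U c) c :=
    intervalIntegral.integral_hasDerivAt_right (hUc.intervalIntegrable c c)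
      (hUc.stronglyMeasurableAtFilter _ _) hUc.continuousAt
  have hseq : Tendsto (fun n : ℕ => c + 1/((n:ℝ)+1)) atTop (nhdsWithin c {c}ᶜ) := by
    apply tendsto_nhdsWithin_of_tendsto_nhds_of_eventually_within
    · have h0 : Tendsto (fun n : ℕ => 1/((n:ℝ)+1)) atTop (nhds 0) :=
        tendsto_one_div_add_atTop_nhds_zero_nat
      simpa using tendsto_const_nhds.add h0
    · filter_upwards with n
      have : (0:ℝ) < 1/((n:ℝ)+1) := by positivity
      simp only [Set.mem_compl_iff, Set.mem_singleton_iff]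
      intro h
      nlinarith [h]
  have htend := (hasDerivAt_iff_tendsto_slope.mp hD).comp hseq
  refine htend.congr ?_
  intro n
  have hne : (1:ℝ)/((n:ℝ)+1) ≠ 0 := by positivity
  show slope G c (c + 1/((n:ℝ)+1)) = _
  rw [slope_def_field]
  have hGc : G c = 0 := intervalIntegral.integral_same
  rw [hGc, sub_zero, add_sub_cancel_left]
  rw [div_div_eq_mul_div, div_one]

/-- FTC for Lipschitz functions. -/
lemma lip_ftc (hL : LipschitzWith K U) {x1 x2 : ℝ} (h12 : x1 ≤ x2) :
    U x2 - U x1 = ∫ s in x1..x2, deriv U s := by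
  have hUc : Continuous U := hL.continuous
  have hUi : ∀ a b : ℝ, IntervalIntegrable U volume a b := fun a b =>
    hUc.intervalIntegrable a b
  set F : ℕ → ℝ := fun n =>
    ∫ s in x1..x2, (U (s + 1/((n:ℝ)+1)) - U s) * ((n:ℝ)+1) with hF
  -- identity
  have hid : ∀ n : ℕ, F n =
      (∫ s in x2..(x2 + 1/((n:ℝ)+1)), U s) * ((n:ℝ)+1) -
      (∫ s in x1..(x1 + 1/((n:ℝ)+1)), U s) * ((n:ℝ)+1) := by
    intro n
    set h : ℝ := 1/((n:ℝ)+1) with hh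
    have e1 : ∫ s in x1..x2, (U (s + h) - U s) * ((n:ℝ)+1) =
        ((∫ s in x1..x2, U (s + h)) - ∫ s in x1..x2, U s) * ((n:ℝ)+1) := by
      have hci : IntervalIntegrable (fun s : ℝ => U (s + h)) volume x1 x2 :=
        Continuous.intervalIntegrable (by continuity) x1 x2
      rw [← intervalIntegral.integral_sub hci (hUi _ _)]
      rw [← intervalIntegral.integral_mul_const]
    have e2 : (∫ s in x1..x2, U (s + h)) = ∫ s in (x1+h)..(x2+h), U s :=
      intervalIntegral.integral_comp_add_right _ _
    have e3 : (∫ s in x1..x2, U s) + (∫ s in x2..(x2+h), U s) = ∫ s in x1..(x2+h), U s :=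
      intervalIntegral.integral_add_adjacent_intervals (hUi _ _) (hUi _ _)
    have e4 : (∫ s in x1..(x1+h), U s) + (∫ s in (x1+h)..(x2+h), U s) =
        ∫ s in x1..(x2+h), U s :=
      intervalIntegral.integral_add_adjacent_intervals (hUi _ _) (hUi _ _)
    rw [hF]
    simp only []
    rw [e1, e2]
    nlinarith [e3, e4]
  -- limit 1
  have hlim1 : Tendsto F atTop (nhds (U x2 - U x1)) := by
    have := (avg_tendsto hUc x2).sub (avg_tendsto hUc x1)
    refine this.congr ?_
    intro n
    rw [hid n]
  -- limit 2 : DCT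
  have hder : ∀ᵐ s ∂volume, s ∈ Set.uIoc x1 x2 →
      Tendsto (fun n : ℕ => (U (s + 1/((n:ℝ)+1)) - U s) * ((n:ℝ)+1)) atTop
        (nhds (deriv U s)) := by
    filter_upwards [hL.ae_differentiableAt] with s hs _
    have hD := hs.hasDerivAt
    have hseq : Tendsto (fun n : ℕ => s + 1/((n:ℝ)+1)) atTop (nhdsWithin s {s}ᶜ) := by
      apply tendsto_nhdsWithin_of_tendsto_nhds_of_eventually_within
      · have h0 : Tendsto (fun n : ℕ => 1/((n:ℝ)+1)) atTop (nhds 0) :=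
          tendsto_one_div_add_atTop_nhds_zero_nat
        simpa using tendsto_const_nhds.add h0
      · filter_upwards with n
        have : (0:ℝ) < 1/((n:ℝ)+1) := by positivity
        simp only [Set.mem_compl_iff, Set.mem_singleton_iff]
        intro h
        nlinarith [h]
    have htend := ((hasDerivAt_iff_tendsto_slope.mp hD).comp hseq)
    refine htend.congr ?_
    intro n
    show slope U s (s + 1/((n:ℝ)+1)) = _
    rw [slope_def_field, add_sub_cancel_left]
    rw [div_div_eq_mul_div, div_one]
  have hlim2 : Tendsto F atTop (nhds (∫ s in x1..x2, deriv U s)) := by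
    refine intervalIntegral.tendsto_integral_filter_of_dominated_convergence
      (fun _ => (K:ℝ)) ?_ ?_ ?_ hder
    · filter_upwards with n
      exact (Continuous.aestronglyMeasurable (by continuity)).restrict
    · filter_upwards with n
      filter_upwards with s _
      have h1 : |U (s + 1/((n:ℝ)+1)) - U s| ≤ (K:ℝ) * (1/((n:ℝ)+1)) := by
        have := hL.dist_le_mul (s + 1/((n:ℝ)+1)) s
        rw [Real.dist_eq, Real.dist_eq] at this
        have habs : |s + 1/((n:ℝ)+1) - s| = 1/((n:ℝ)+1) := by
          rw [add_sub_cancel_left, abs_of_pos (by positivity)]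
        rw [habs] at this
        exact this
      have hpos : (0:ℝ) < ((n:ℝ)+1) := by positivity
      rw [Real.norm_eq_abs, abs_mul, abs_of_pos hpos]
      calc |U (s + 1/((n:ℝ)+1)) - U s| * ((n:ℝ)+1)
          ≤ ((K:ℝ) * (1/((n:ℝ)+1))) * ((n:ℝ)+1) := by
            exact mul_le_mul_of_nonneg_right h1 (le_of_lt hpos)
        _ = (K:ℝ) := by field_simp
    · exact intervalIntegrable_const
  exact tendsto_nhds_unique hlim1 hlim2

/-- a.e. derivative bounds imply slope bounds for Lipschitz functions. -/
lemma lip_slopeIn {m M : ℝ} (hL : LipschitzWith K U)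
    (hd : ∀ᵐ x ∂volume, deriv U x ∈ Set.Icc m M) : SlopeIn m M U := by
  intro x d hd0
  have h12 : x ≤ x + d := by linarith
  rw [lip_ftc hL h12]
  have hint : IntervalIntegrable (deriv U) volume x (x + d) := by
    constructor <;>
    · refine Integrable.mono' (integrable_const (max |m| |M|))
        ((measurable_deriv U).aestronglyMeasurable.restrict) ?_
      refine ae_restrict_of_ae ?_
      filter_upwards [hd] with s hs
      rcases hs with ⟨h1, h2⟩
      rw [Real.norm_eq_abs, _root_.abs_le]
      constructor
      · calc -(max |m| |M|) ≤ -|m| := by simp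
          _ ≤ m := neg_abs_le m
          _ ≤ deriv U s := h1
      · exact le_trans (le_trans h2 (le_abs_self M)) (le_max_right _ _)
  constructor
  · have : ∫ s in x..(x+d), (fun _ => m) s ≤ ∫ s in x..(x+d), deriv U s := by
      refine intervalIntegral.integral_mono_ae h12 intervalIntegrable_const hint ?_
      filter_upwards [hd] with s hs using hs.1
    simpa [mul_comm] using this
  · have : ∫ s in x..(x+d), deriv U s ≤ ∫ s in x..(x+d), (fun _ => M) s := by
      refine intervalIntegral.integral_mono_ae h12 hint intervalIntegrable_const ?_
      filter_upwards [hd] with s hs using hs.2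
    simpa [mul_comm] using this

end FTC

noncomputable def cost (m M d : ℝ) : ℝ := if 0 ≤ d then M * d else m * d

section Cost

variable {m M : ℝ} (hmM : m ≤ M)

lemma cost_zero : cost m M 0 = 0 := by simp [cost]

include hmM

lemma cost_slope {d1 d2 : ℝ} (h : d1 ≤ d2) :
    cost m M d2 - cost m M d1 ≤ M * (d2 - d1) ∧
      m * (d2 - d1) ≤ cost m M d2 - cost m M d1 := by
  unfold cost
  split_ifs with h1 h2 h2
  · constructor <;> nlinarith
  · constructor <;> nlinarith
  · exact absurd (le_trans h2 h) h1
  · constructor <;> nlinarith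

lemma SlopeIn.le_cost {U : ℝ → ℝ} (hS : SlopeIn m M U) (x s : ℝ) :
    U x ≤ U s + cost m M (x - s) := by
  unfold cost
  split_ifs with h1
  · obtain ⟨_, h2⟩ := hS s (x - s) h1
    rw [add_sub_cancel] at h2
    linarith
  · push_neg at h1
    obtain ⟨h2, _⟩ := hS x (s - x) (by linarith)
    rw [add_sub_cancel] at h2
    have : m * (x - s) = -(m * (s - x)) := by ring
    linarith

end Cost

noncomputable def Wmax (f : ℝ → ℝ) (T : ℝ) (uT : ℝ → ℝ) (xc m M : ℝ) (x : ℝ) : ℝ :=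
  sInf (Set.range fun y =>
    Uflat f T uT xc (xiC f T uT y) + cost m M (x - xiC f T uT y))

section WW

variable {f g uT : ℝ → ℝ} {T m M : ℝ} (S : Setup f g uT T m M) (xc : ℝ)

include S

lemma flat_slopeIn : SlopeIn m M (Uflat f T uT xc) := fun x d hd => Uflat_slope S xc hd

lemma W_term_ge (x y : ℝ) : Uflat f T uT xc x ≤
    Uflat f T uT xc (xiC f T uT y) + cost m M (x - xiC f T uT y) :=
  (flat_slopeIn S xc).le_cost S.hmM x (xiC f T uT y)

lemma W_bddBelow (x : ℝ) : BddBelow (Set.range fun y =>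
    Uflat f T uT xc (xiC f T uT y) + cost m M (x - xiC f T uT y)) :=
  ⟨Uflat f T uT xc x, by rintro z ⟨y, rfl⟩; exact W_term_ge S xc x y⟩

lemma W_ge_flat (x : ℝ) : Uflat f T uT xc x ≤ Wmax f T uT xc m M x :=
  le_csInf (Set.range_nonempty _) (by rintro z ⟨y, rfl⟩; exact W_term_ge S xc x y)

lemma W_le_term (x y : ℝ) : Wmax f T uT xc m M x ≤
    Uflat f T uT xc (xiC f T uT y) + cost m M (x - xiC f T uT y) :=
  csInf_le (W_bddBelow S xc x) ⟨y, rfl⟩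

lemma W_at_xiC (z : ℝ) :
    Wmax f T uT xc m M (xiC f T uT z) = Uflat f T uT xc (xiC f T uT z) := by
  refine le_antisymm ?_ (W_ge_flat S xc _)
  have := W_le_term S xc (xiC f T uT z) z
  rwa [sub_self, cost_zero, add_zero] at this

lemma W_slopeIn : SlopeIn m M (Wmax f T uT xc m M) := by
  intro x d hd
  constructor
  · have key : Wmax f T uT xc m M x + m * d ≤ Wmax f T uT xc m M (x + d) := by
      refine le_csInf (Set.range_nonempty _) ?_
      rintro z ⟨y, rfl⟩
      show _ ≤ Uflat f T uT xc (xiC f T uT y) + cost m M (x + d - xiC f T uT y)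
      have h1 := W_le_term S xc x y
      have h2 := (cost_slope S.hmM
        (show x - xiC f T uT y ≤ x + d - xiC f T uT y by linarith)).2
      have h3 : m * ((x + d - xiC f T uT y) - (x - xiC f T uT y)) = m * d := by ring_nf
      rw [h3] at h2
      linarith
    linarith
  · have key : Wmax f T uT xc m M (x + d) - M * d ≤ Wmax f T uT xc m M x := by
      refine le_csInf (Set.range_nonempty _) ?_
      rintro z ⟨y, rfl⟩
      show _ ≤ Uflat f T uT xc (xiC f T uT y) + cost m M (x - xiC f T uT y)
      have h1 := W_le_term S xc (x + d) y
      have h2 := (cost_slope S.hmM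
        (show x - xiC f T uT y ≤ x + d - xiC f T uT y by linarith)).1
      have h3 : M * ((x + d - xiC f T uT y) - (x - xiC f T uT y)) = M * d := by ring_nf
      rw [h3] at h2
      linarith
    linarith
  
lemma W_hopf (x : ℝ) : HopfLax f T (Wmax f T uT xc m M) x = UT uT xc x := by
  have hge : ∀ ξ, UT uT xc x ≤ Wmax f T uT xc m M ξ + T * legendre f ((x - ξ) / T) := by
    intro ξ
    have h1 := Uflat_ge_term S xc ξ x
    have h2 := W_ge_flat S xc ξ
    linarith
  refine le_antisymm ?_ (le_csInf (Set.range_nonempty _) (by rintro z ⟨ξ, rfl⟩; exact hge ξ))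
  have hmem : Wmax f T uT xc m M (xiC f T uT x) +
      T * legendre f ((x - xiC f T uT x) / T) = UT uT xc x := by
    rw [W_at_xiC S xc x, Uflat_at_xiC S xc x]
    ring
  rw [← hmem]
  exact csInf_le ⟨UT uT xc x, by rintro z ⟨ξ, rfl⟩; exact hge ξ⟩ ⟨xiC f T uT x, rfl⟩

lemma W_max {U : ℝ → ℝ} {K : NNReal} (hL : LipschitzWith K U)
    (hd : ∀ᵐ x ∂volume, deriv U x ∈ Set.Icc m M)
    (hHL : ∀ x, HopfLax f T U x = UT uT xc x)
    (hlc : ∀ x, Tendsto uT (nhdsWithin x (Set.Iio x)) (nhds (uT x))) (x : ℝ) :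
    U x ≤ Wmax f T uT xc m M x := by
  refine le_csInf (Set.range_nonempty _) ?_
  rintro z ⟨y, rfl⟩
  have h1 : U x ≤ U (xiC f T uT y) + cost m M (x - xiC f T uT y) :=
    (lip_slopeIn hL hd).le_cost S.hmM x (xiC f T uT y)
  rw [forced S xc hL hHL hlc y] at h1
  exact h1

end WW

theorem stmt_14 (f : ℝ → ℝ) (hf : CondF f) (T : ℝ) (hT : 0 < T)
    (J : Set ℝ) (hJne : J.Nonempty) (hJcp : IsCompact J) (hJoc : J.OrdConnected)
    (uT : ℝ → ℝ) (huT : Measurable uT)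
    (hlc : LeftCts uT) (huTJ : ∀ x, uT x ∈ J) (hO : Oleinik f T uT) (xc : ℝ) :
    (∀ x : ℝ, ((fun U : ℝ → ℝ => U x) '' IIT f T uT xc J).Nonempty ∧
      BddAbove ((fun U : ℝ → ℝ => U x) '' IIT f T uT xc J)) ∧
    Usharp f T uT xc J ∈ IIT f T uT xc J := by
  classical
  obtain ⟨g, hgc, hgm, hg, hg'⟩ := exists_g hf
  set m := sInf J with hm
  set M := sSup J with hM
  have hmJ : m ∈ J := hJcp.sInf_mem hJne
  have hMJ : M ∈ J := hJcp.sSup_mem hJne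
  have hmM : m ≤ M := csInf_le_csSup hJne hJcp.bddBelow hJcp.bddAbove
  have hJeq : J = Set.Icc m M := by
    apply le_antisymm
    · intro x hx
      exact ⟨csInf_le hJcp.bddBelow hx, le_csSup hJcp.bddAbove hx⟩
    · exact hJoc.out hmJ hMJ
  have hmem : ∀ x, uT x ∈ Set.Icc m M := fun x => hJeq ▸ huTJ x
  have S : Setup f g uT T m M := ⟨hf, hT, hgc, hgm, hg, hg', huT, hO, hmem, hmM⟩
  have hflat_slope := flat_slopeIn S xc
  have hflatMem : Uflat f T uT xc ∈ IIT f T uT xc J := by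
    refine ⟨⟨_, hflat_slope.lipschitz⟩, ?_, hopfLax_flat S xc⟩
    rw [hJeq]
    exact hflat_slope.deriv_mem
  have hWslope := W_slopeIn S xc
  have hWMem : Wmax f T uT xc m M ∈ IIT f T uT xc J := by
    refine ⟨⟨_, hWslope.lipschitz⟩, ?_, W_hopf S xc⟩
    rw [hJeq]
    exact hWslope.deriv_mem
  have hub : ∀ U ∈ IIT f T uT xc J, ∀ x, U x ≤ Wmax f T uT xc m M x := by
    rintro U ⟨⟨K, hL⟩, hd, hHL⟩ x
    rw [hJeq] at hd
    exact W_max S xc hL hd hHL hlc x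
  constructor
  · intro x
    constructor
    · exact ⟨Uflat f T uT xc x, ⟨Uflat f T uT xc, hflatMem, rfl⟩⟩
    · refine ⟨Wmax f T uT xc m M x, ?_⟩
      rintro z ⟨U, hU, rfl⟩
      exact hub U hU x
  · have heq : Usharp f T uT xc J = Wmax f T uT xc m M := by
      funext x
      refine IsGreatest.csSup_eq ⟨⟨Wmax f T uT xc m M, hWMem, rfl⟩, ?_⟩
      rintro z ⟨U, hU, rfl⟩
      exact hub U hU x
    rw [heq]
    exact hWMem
end

section
/- (Theorem 1, compactness part, Hopf–Lax form.) Let J be a nonempty compact interval of ℝ, and suppose u_T is left continuous, takes values in J, and satisfies the Oleinik condition (O) at T. Then the set II_T(U_T; J) is convex, and it is compact with respect to the topology of uniform convergence on compact subsets of ℝ: every sequence in II_T(U_T; J) admits a subsequence converging uniformly on every compact subset of ℝ to an element of II_T(U_T; J). -/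
open Filter MeasureTheory

namespace Stmt17

open Set

variable {f : ℝ → ℝ}

lemma diff_f (hf : CondF f) : Differentiable ℝ f :=
  hf.1.differentiable (by norm_num)

lemma cont_derivf (hf : CondF f) : Continuous (deriv f) :=
  hf.1.continuous_deriv (by norm_num)

lemma mono_derivf (hf : CondF f) : StrictMono (deriv f) :=
  strictMono_of_deriv_pos hf.2.1

lemma surj_derivf (hf : CondF f) : Function.Surjective (deriv f) :=
  (cont_derivf hf).surjective hf.2.2.2 hf.2.2.1

/-- Inverse of `f'`. -/
noncomputable def ginv (f : ℝ → ℝ) : ℝ → ℝ := Function.invFun (deriv f)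

lemma ginv_right (hf : CondF f) (y : ℝ) : deriv f (ginv f y) = y :=
  Function.rightInverse_invFun (surj_derivf hf) y

lemma ginv_left (hf : CondF f) (x : ℝ) : ginv f (deriv f x) = x :=
  Function.leftInverse_invFun (mono_derivf hf).injective x

lemma ginv_mono (hf : CondF f) : Monotone (ginv f) := by
  intro a b hab
  by_contra hlt
  push_neg at hlt
  have := (mono_derivf hf) hlt
  rw [ginv_right hf, ginv_right hf] at this
  exact absurd hab (not_le.2 this)

lemma ginv_surj (hf : CondF f) : Function.Surjective (ginv f) :=
  fun x => ⟨deriv f x, ginv_left hf x⟩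

lemma ginv_cont (hf : CondF f) : Continuous (ginv f) :=
  (ginv_mono hf).continuous_of_surjective (ginv_surj hf)

lemma tangent_le (hf : CondF f) (y x : ℝ) :
    y * x - f x ≤ y * ginv f y - f (ginv f y) := by
  set c := ginv f y with hc
  have hdc : deriv f c = y := ginv_right hf y
  -- φ z = f z - y * z has minimum at c
  set φ : ℝ → ℝ := fun z => f z - y * z with hφ
  have hdiff : ∀ z, HasDerivAt φ (deriv f z - y) z := by
    intro z
    have h1 := ((diff_f hf z).hasDerivAt).sub ((hasDerivAt_id z).const_mul y)
    exact h1.congr_deriv (by simp)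
  have hderiv : ∀ z, deriv φ z = deriv f z - y := fun z => (hdiff z).deriv
  have hcφ : Continuous φ := ((diff_f hf).continuous).sub (continuous_const.mul continuous_id)
  have hmin : ∀ z, φ c ≤ φ z := by
    intro z
    rcases le_total c z with h | h
    · have hmono : MonotoneOn φ (Ici c) := by
        apply monotoneOn_of_deriv_nonneg (convex_Ici c)
          (hcφ.continuousOn)
        · intro z hz
          exact ((hdiff z).differentiableAt).differentiableWithinAt
        · intro z hz
          rw [hderiv z, sub_nonneg, ← hdc]
          exact ((mono_derivf hf).le_iff_le).2 (le_of_lt (by simpa using hz))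
      exact hmono (self_mem_Ici) h h
    · have hmono : AntitoneOn φ (Iic c) := by
        apply antitoneOn_of_deriv_nonpos (convex_Iic c)
          (hcφ.continuousOn)
        · intro z hz
          exact ((hdiff z).differentiableAt).differentiableWithinAt
        · intro z hz
          rw [hderiv z, sub_nonpos, ← hdc]
          exact ((mono_derivf hf).le_iff_le).2 (le_of_lt (by simpa using hz))
      exact hmono h self_mem_Iic h
  have := hmin x
  simp only [hφ] at this
  linarith

lemma legendre_bddAbove (hf : CondF f) (y : ℝ) :
    BddAbove (Set.range fun x => y * x - f x) := by
  refine ⟨y * ginv f y - f (ginv f y), ?_⟩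
  rintro _ ⟨x, rfl⟩
  exact tangent_le hf y x

lemma legendre_eq (hf : CondF f) (y : ℝ) :
    legendre f y = y * ginv f y - f (ginv f y) := by
  apply le_antisymm
  · exact csSup_le (Set.range_nonempty _) (by rintro _ ⟨x, rfl⟩; exact tangent_le hf y x)
  · exact le_csSup (legendre_bddAbove hf y) ⟨ginv f y, rfl⟩

lemma legendre_ge (hf : CondF f) (y x : ℝ) : y * x - f x ≤ legendre f y :=
  le_csSup (legendre_bddAbove hf y) ⟨x, rfl⟩

lemma legendre_hasDerivAt (hf : CondF f) (y₀ : ℝ) :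
    HasDerivAt (legendre f) (ginv f y₀) y₀ := by
  rw [hasDerivAt_iff_tendsto_slope]
  have key : ∀ y : ℝ, y ≠ y₀ → |slope (legendre f) y₀ y - ginv f y₀| ≤ |ginv f y - ginv f y₀| := by
    intro y hy
    have h1 : (y - y₀) * ginv f y₀ ≤ legendre f y - legendre f y₀ := by
      have := legendre_ge hf y (ginv f y₀)
      rw [legendre_eq hf y₀]
      linarith [this]
    have h2 : legendre f y - legendre f y₀ ≤ (y - y₀) * ginv f y := by
      have := legendre_ge hf y₀ (ginv f y)
      rw [legendre_eq hf y]
      linarith [this]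
    rw [slope_def_field]
    rcases lt_or_gt_of_ne hy with h | h
    · -- y < y₀, y - y₀ < 0
      have hneg : y - y₀ < 0 := by linarith
      have hs1 : (legendre f y - legendre f y₀) / (y - y₀) ≤ ginv f y₀ := by
        rw [div_le_iff_of_neg hneg]; linarith [h1]
      have hs2 : ginv f y ≤ (legendre f y - legendre f y₀) / (y - y₀) := by
        rw [le_div_iff_of_neg hneg]; linarith [h2]
      rw [abs_of_nonpos (by linarith : (legendre f y - legendre f y₀) / (y - y₀) - ginv f y₀ ≤ 0),
        abs_of_nonpos (by linarith : ginv f y - ginv f y₀ ≤ 0)]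
      linarith
    · -- y₀ < y
      have hpos : (0:ℝ) < y - y₀ := by linarith
      have hs1 : ginv f y₀ ≤ (legendre f y - legendre f y₀) / (y - y₀) := by
        rw [le_div_iff₀ hpos]; linarith [h1]
      have hs2 : (legendre f y - legendre f y₀) / (y - y₀) ≤ ginv f y := by
        rw [div_le_iff₀ hpos]; linarith [h2]
      rw [abs_of_nonneg (by linarith), abs_of_nonneg (by linarith)]
      linarith
  have hg : Tendsto (fun y => |ginv f y - ginv f y₀|) (nhdsWithin y₀ {y₀}ᶜ) (nhds 0) := by
    have : Tendsto (fun y => |ginv f y - ginv f y₀|) (nhds y₀) (nhds 0) := by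
      have h0 : Tendsto (fun y => ginv f y - ginv f y₀) (nhds y₀) (nhds 0) := by
        have := (ginv_cont hf).tendsto y₀
        have := this.sub_const (ginv f y₀)
        simpa using this
      simpa using h0.abs
    exact this.mono_left nhdsWithin_le_nhds
  rw [tendsto_iff_dist_tendsto_zero]
  refine squeeze_zero' (Filter.Eventually.of_forall fun y => dist_nonneg) ?_ hg
  filter_upwards [self_mem_nhdsWithin] with y hy
  rw [Real.dist_eq]
  exact key y hy

lemma legendre_cont (hf : CondF f) : Continuous (legendre f) :=
  continuous_iff_continuousAt.2 fun y => (legendre_hasDerivAt hf y).continuousAt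


section FTC

lemma abs_deriv_le_of_lipschitz {U : ℝ → ℝ} {K : NNReal} (hU : LipschitzWith K U) (x : ℝ) :
    |deriv U x| ≤ (K : ℝ) := by
  by_cases hd : DifferentiableAt ℝ U x
  · have hs := hasDerivAt_iff_tendsto_slope.1 hd.hasDerivAt
    have habs : Tendsto (fun y => |slope U x y|) (nhdsWithin x {x}ᶜ) (nhds |deriv U x|) := hs.abs
    apply le_of_tendsto habs
    filter_upwards [self_mem_nhdsWithin] with y hy
    rw [slope_def_field, abs_div, div_le_iff₀ (abs_pos.2 (sub_ne_zero.2 hy))]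
    have h := hU.dist_le_mul y x
    rw [Real.dist_eq, Real.dist_eq] at h
    calc |U y - U x| ≤ (K : ℝ) * |y - x| := h
      _ = (K : ℝ) * |y - x| := rfl
  · rw [deriv_zero_of_not_differentiableAt hd]
    simpa using K.2

lemma lipschitz_integral_deriv {U : ℝ → ℝ} {K : NNReal} (hU : LipschitzWith K U) {a b : ℝ}
    (hab : a ≤ b) : ∫ x in a..b, deriv U x = U b - U a := by
  set h : ℕ → ℝ := fun n => 1 / (n + 1) with hh
  have hpos : ∀ n, 0 < h n := fun n => by positivity
  have hlim : Tendsto h atTop (nhds 0) := tendsto_one_div_add_atTop_nhds_zero_nat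
  have hUc : Continuous U := hU.continuous
  have hint : ∀ p q : ℝ, IntervalIntegrable U volume p q := fun p q => hUc.intervalIntegrable p q
  set D : ℕ → ℝ → ℝ := fun n x => (U (x + h n) - U x) / h n with hD
  -- pointwise a.e. convergence of difference quotients
  have step_ae : ∀ᵐ x ∂volume, Tendsto (fun n => D n x) atTop (nhds (deriv U x)) := by
    filter_upwards [hU.ae_differentiableAt_real] with x hx
    have hs := hasDerivAt_iff_tendsto_slope.1 hx.hasDerivAt
    have hseq : Tendsto (fun n => x + h n) atTop (nhdsWithin x {x}ᶜ) := by
      rw [tendsto_nhdsWithin_iff]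
      constructor
      · have h2 := hlim.const_add x
        rw [add_zero] at h2
        exact h2
      · exact Filter.Eventually.of_forall fun n => by
          simp only [Set.mem_compl_iff, Set.mem_singleton_iff]
          have := hpos n; intro hcon; nlinarith [hcon]
    have hcomp := hs.comp hseq
    have heq : ∀ n, slope U x (x + h n) = D n x := by
      intro n
      rw [slope_def_field, add_sub_cancel_left]
    exact Tendsto.congr (fun n => heq n) hcomp
  -- bound
  have hbound : ∀ n, ∀ x : ℝ, ‖D n x‖ ≤ (K : ℝ) := by
    intro n x
    rw [Real.norm_eq_abs, hD, abs_div, abs_of_pos (hpos n),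
      div_le_iff₀ (hpos n)]
    have hd := hU.dist_le_mul (x + h n) x
    rw [Real.dist_eq, Real.dist_eq] at hd
    calc |U (x + h n) - U x| ≤ (K : ℝ) * |x + h n - x| := hd
      _ = (K : ℝ) * h n := by rw [add_sub_cancel_left, abs_of_pos (hpos n)]
  -- dominated convergence
  have step_int : Tendsto (fun n => ∫ x in Set.Ioc a b, D n x ∂volume) atTop
      (nhds (∫ x in Set.Ioc a b, deriv U x ∂volume)) := by
    apply MeasureTheory.tendsto_integral_of_dominated_convergence (fun _ => (K : ℝ))
    · intro n
      exact (((hUc.comp (continuous_id.add continuous_const)).sub hUc).div_const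
        (h n)).aestronglyMeasurable
    · have : IntegrableOn (fun _ : ℝ => (K : ℝ)) (Set.Ioc a b) volume :=
        MeasureTheory.integrableOn_const measure_Ioc_lt_top.ne
      exact this
    · intro n
      exact Filter.Eventually.of_forall fun x => hbound n x
    · exact ae_restrict_of_ae step_ae
  -- computing the integral of the difference quotient
  have step_comp : ∀ n, ∫ x in a..b, D n x =
      ((∫ x in b..(b + h n), U x) - ∫ x in a..(a + h n), U x) / h n := by
    intro n
    have e1 : ∫ x in a..b, D n x = (∫ x in a..b, (U (x + h n) - U x)) / h n := by
      rw [← intervalIntegral.integral_div]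
    have e2 : ∫ x in a..b, (U (x + h n) - U x) =
        (∫ x in a..b, U (x + h n)) - ∫ x in a..b, U x := by
      apply intervalIntegral.integral_sub
      · exact ((hUc.comp (continuous_id.add continuous_const))).intervalIntegrable a b
      · exact hint a b
    have e3 : ∫ x in a..b, U (x + h n) = ∫ x in (a + h n)..(b + h n), U x :=
      intervalIntegral.integral_comp_add_right U (h n)
    have A1 : (∫ x in a..(a + h n), U x) + ∫ x in (a + h n)..(b + h n), U x
        = ∫ x in a..(b + h n), U x :=
      intervalIntegral.integral_add_adjacent_intervals (hint _ _) (hint _ _)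
    have A2 : (∫ x in a..b, U x) + ∫ x in b..(b + h n), U x = ∫ x in a..(b + h n), U x :=
      intervalIntegral.integral_add_adjacent_intervals (hint _ _) (hint _ _)
    rw [e1, e2, e3]
    congr 1
    linarith
  -- one-sided limits at the endpoints
  have endpoint : ∀ c : ℝ, Tendsto (fun n => (∫ x in c..(c + h n), U x) / h n) atTop
      (nhds (U c)) := by
    intro c
    have hF : HasDerivAt (fun u => ∫ x in c..u, U x) (U c) c :=
      intervalIntegral.integral_hasDerivAt_right (hint c c)
        (hUc.stronglyMeasurable.stronglyMeasurableAtFilter) hUc.continuousAt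
    have hs := hasDerivAt_iff_tendsto_slope.1 hF
    have hseq : Tendsto (fun n => c + h n) atTop (nhdsWithin c {c}ᶜ) := by
      rw [tendsto_nhdsWithin_iff]
      constructor
      · have h2 := hlim.const_add c
        rw [add_zero] at h2
        exact h2
      · exact Filter.Eventually.of_forall fun n => by
          simp only [Set.mem_compl_iff, Set.mem_singleton_iff]
          have := hpos n; intro hcon; nlinarith [hcon]
    have hcomp := hs.comp hseq
    have heq : ∀ n, slope (fun u => ∫ x in c..u, U x) c (c + h n)
        = (∫ x in c..(c + h n), U x) / h n := by
      intro n
      rw [slope_def_field, add_sub_cancel_left, intervalIntegral.integral_same, sub_zero]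
    exact Tendsto.congr (fun n => heq n) hcomp
  have step_rhs : Tendsto (fun n => ∫ x in a..b, D n x) atTop (nhds (U b - U a)) := by
    have := (endpoint b).sub (endpoint a)
    apply Tendsto.congr' (Filter.Eventually.of_forall fun n => ?_) this
    rw [step_comp n, sub_div]
  have step_lhs : Tendsto (fun n => ∫ x in a..b, D n x) atTop
      (nhds (∫ x in a..b, deriv U x)) := by
    have hres : ∀ n, ∫ x in a..b, D n x = ∫ x in Set.Ioc a b, D n x ∂volume := fun n =>
      intervalIntegral.integral_of_le hab
    rw [intervalIntegral.integral_of_le hab]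
    exact Tendsto.congr (fun n => (hres n).symm) step_int
  exact tendsto_nhds_unique step_lhs step_rhs

end FTC


section DQ

/-- Difference quotient property. -/
def DQ (m M : ℝ) (U : ℝ → ℝ) : Prop :=
  ∀ a b : ℝ, a ≤ b → U b - U a ∈ Set.Icc (m * (b - a)) (M * (b - a))

lemma dq_of_ae_deriv_mem {U : ℝ → ℝ} {K : NNReal} (hU : LipschitzWith K U) {m M : ℝ}
    (hae : ∀ᵐ x ∂volume, deriv U x ∈ Set.Icc m M) : DQ m M U := by
  intro a b hab
  rw [← lipschitz_integral_deriv hU hab, intervalIntegral.integral_of_le hab]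
  have hintg : IntegrableOn (deriv U) (Set.Ioc a b) volume := by
    apply MeasureTheory.Measure.integrableOn_of_bounded measure_Ioc_lt_top.ne
      ((measurable_deriv U).aestronglyMeasurable)
    exact Filter.Eventually.of_forall fun x => by
      rw [Real.norm_eq_abs]; exact abs_deriv_le_of_lipschitz hU x
  have hconst : ∀ c : ℝ, IntegrableOn (fun _ : ℝ => c) (Set.Ioc a b) volume := fun c =>
    MeasureTheory.integrableOn_const measure_Ioc_lt_top.ne
  have hICc : ∀ c : ℝ, ∫ _x in Set.Ioc a b, c ∂volume = c * (b - a) := by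
    intro c
    rw [MeasureTheory.setIntegral_const, MeasureTheory.measureReal_def, Real.volume_Ioc,
      ENNReal.toReal_ofReal (by linarith : (0:ℝ) ≤ b - a), smul_eq_mul]
    ring
  constructor
  · rw [← hICc m]
    apply MeasureTheory.integral_mono_ae (hconst m) hintg
    exact ae_restrict_of_ae (hae.mono fun x hx => hx.1)
  · rw [← hICc M]
    apply MeasureTheory.integral_mono_ae hintg (hconst M)
    exact ae_restrict_of_ae (hae.mono fun x hx => hx.2)

lemma abs_sub_le_of_dq {m M : ℝ} {U : ℝ → ℝ} (hdq : DQ m M U) (x y : ℝ) :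
    |U x - U y| ≤ max |m| |M| * |x - y| := by
  set C := max |m| |M| with hC
  have key : ∀ a b : ℝ, a ≤ b → |U b - U a| ≤ C * (b - a) := by
    intro a b hab
    obtain ⟨h1, h2⟩ := hdq a b hab
    rw [abs_le]
    constructor
    · have : -(C * (b - a)) ≤ m * (b - a) := by
        have hm : -C ≤ m := by
          have := neg_abs_le m
          have : -|m| ≤ m := neg_abs_le m
          have hCm : |m| ≤ C := le_max_left _ _
          linarith
        nlinarith [sub_nonneg.2 hab]
      linarith
    · have : M * (b - a) ≤ C * (b - a) := by
        have hM : M ≤ C := le_trans (le_abs_self M) (le_max_right _ _)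
        nlinarith [sub_nonneg.2 hab]
      linarith
  rcases le_total x y with h | h
  · rw [abs_sub_comm (U x) (U y), abs_sub_comm x y]
    calc |U y - U x| ≤ C * (y - x) := key x y h
      _ = C * |y - x| := by rw [abs_of_nonneg (by linarith)]
  · calc |U x - U y| ≤ C * (x - y) := key y x h
      _ = C * |x - y| := by rw [abs_of_nonneg (by linarith)]

lemma lipschitzWith_of_dq {m M : ℝ} {U : ℝ → ℝ} (hdq : DQ m M U) :
    LipschitzWith (Real.toNNReal (max |m| |M|)) U := by
  apply LipschitzWith.of_dist_le_mul
  intro x y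
  rw [Real.dist_eq, Real.dist_eq, Real.coe_toNNReal _ (by positivity)]
  exact abs_sub_le_of_dq hdq x y

lemma dq_continuous {m M : ℝ} {U : ℝ → ℝ} (hdq : DQ m M U) : Continuous U :=
  (lipschitzWith_of_dq hdq).continuous

lemma ae_deriv_mem_of_dq {m M : ℝ} {U : ℝ → ℝ} (hdq : DQ m M U) :
    ∀ᵐ x ∂volume, deriv U x ∈ Set.Icc m M := by
  filter_upwards [(lipschitzWith_of_dq hdq).ae_differentiableAt_real] with x hx
  have hs := hasDerivAt_iff_tendsto_slope.1 hx.hasDerivAt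
  apply isClosed_Icc.mem_of_tendsto hs
  filter_upwards [self_mem_nhdsWithin] with y hy
  have hxy : y ≠ x := hy
  rcases lt_or_gt_of_ne hxy with h | h
  · -- y < x
    rw [slope_comm, slope_def_field]
    have hpos : (0:ℝ) < x - y := by linarith
    obtain ⟨h1, h2⟩ := hdq y x (le_of_lt h)
    constructor
    · rw [le_div_iff₀ hpos]; linarith
    · rw [div_le_iff₀ hpos]; linarith
  · -- x < y
    rw [slope_def_field]
    have hpos : (0:ℝ) < y - x := by linarith
    obtain ⟨h1, h2⟩ := hdq x y (le_of_lt h)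
    constructor
    · rw [le_div_iff₀ hpos]; linarith
    · rw [div_le_iff₀ hpos]; linarith

lemma dq_smul_add {m M a b : ℝ} {U V : ℝ → ℝ} (hU : DQ m M U) (hV : DQ m M V)
    (ha : 0 ≤ a) (hb : 0 ≤ b) (hab : a + b = 1) :
    DQ m M (fun x => a * U x + b * V x) := by
  intro p q hpq
  obtain ⟨h1, h2⟩ := hU p q hpq
  obtain ⟨h3, h4⟩ := hV p q hpq
  simp only [Set.mem_Icc]
  have hm : a * (m * (q - p)) + b * (m * (q - p)) = m * (q - p) := by
    rw [← add_mul, hab, one_mul]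
  have hM : a * (M * (q - p)) + b * (M * (q - p)) = M * (q - p) := by
    rw [← add_mul, hab, one_mul]
  constructor
  · nlinarith [mul_le_mul_of_nonneg_left h1 ha, mul_le_mul_of_nonneg_left h3 hb]
  · nlinarith [mul_le_mul_of_nonneg_left h2 ha, mul_le_mul_of_nonneg_left h4 hb]

lemma dq_of_tendsto {m M : ℝ} {W : ℕ → ℝ → ℝ} {U : ℝ → ℝ}
    (hW : ∀ n, DQ m M (W n)) (hlim : ∀ x, Tendsto (fun n => W n x) atTop (nhds (U x))) :
    DQ m M U := by
  intro a b hab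
  have ht : Tendsto (fun n => W n b - W n a) atTop (nhds (U b - U a)) :=
    (hlim b).sub (hlim a)
  apply isClosed_Icc.mem_of_tendsto ht
  exact Filter.Eventually.of_forall fun n => hW n a b hab

end DQ


section HopfLaxBasics

variable {T : ℝ} {uT : ℝ → ℝ} {xc : ℝ}

/-- The constant `A` controlling superlinearity of the Legendre transform,
relative to a Lipschitz constant `C`. -/
noncomputable def Acst (f : ℝ → ℝ) (C : ℝ) : ℝ := max (f (C + 1)) (f (-(C + 1)))

lemma legendre_superlinear (hf : CondF f) {C : ℝ} (hC : 0 ≤ C) (s : ℝ) :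
    (C + 1) * |s| - Acst f C ≤ legendre f s := by
  rcases le_total 0 s with h | h
  · have := legendre_ge hf s (C + 1)
    rw [abs_of_nonneg h]
    have hA : f (C + 1) ≤ Acst f C := le_max_left _ _
    nlinarith
  · have := legendre_ge hf s (-(C + 1))
    rw [abs_of_nonpos h]
    have hA : f (-(C + 1)) ≤ Acst f C := le_max_right _ _
    nlinarith

lemma Acst_add_legendre_zero_nonneg (hf : CondF f) {C : ℝ} (hC : 0 ≤ C) :
    0 ≤ Acst f C + legendre f 0 := by
  have h1 := legendre_ge hf 0 (C + 1)
  have h2 : f (C + 1) ≤ Acst f C := le_max_left _ _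
  simp only [zero_mul, zero_sub] at h1
  linarith

/-- Coercivity of the Hopf–Lax functional. -/
lemma hopfLax_coercive (hf : CondF f) (hT : 0 < T) {C : ℝ} (hC : 0 ≤ C) {U : ℝ → ℝ}
    (hUl : ∀ p q : ℝ, |U p - U q| ≤ C * |p - q|) (x ξ : ℝ) :
    U x + |x - ξ| - T * Acst f C ≤ U ξ + T * legendre f ((x - ξ) / T) := by
  have h1 : (C + 1) * |(x - ξ) / T| - Acst f C ≤ legendre f ((x - ξ) / T) :=
    legendre_superlinear hf hC _
  have habs : |(x - ξ) / T| = |x - ξ| / T := by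
    rw [abs_div, abs_of_pos hT]
  have h2 : T * legendre f ((x - ξ) / T) ≥ (C + 1) * |x - ξ| - T * Acst f C := by
    have := mul_le_mul_of_nonneg_left h1 hT.le
    rw [habs] at this
    have hTd : T * ((C + 1) * (|x - ξ| / T)) = (C + 1) * |x - ξ| := by
      field_simp
    nlinarith [this]
  have h3 : U x - C * |x - ξ| ≤ U ξ := by
    have := hUl x ξ
    have habs2 : U x - U ξ ≤ C * |x - ξ| := le_trans (le_abs_self _) this
    linarith
  nlinarith [abs_nonneg (x - ξ)]

lemma hopfLax_bddBelow (hf : CondF f) (hT : 0 < T) {C : ℝ} (hC : 0 ≤ C) {U : ℝ → ℝ}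
    (hUl : ∀ p q : ℝ, |U p - U q| ≤ C * |p - q|) (x : ℝ) :
    BddBelow (Set.range fun ξ => U ξ + T * legendre f ((x - ξ) / T)) := by
  refine ⟨U x - T * Acst f C, ?_⟩
  rintro _ ⟨ξ, rfl⟩
  have := hopfLax_coercive hf hT hC hUl x ξ
  have h0 := abs_nonneg (x - ξ)
  linarith

end HopfLaxBasics


section Minimizer

variable {T : ℝ}

lemma exists_minimizer (hf : CondF f) (hT : 0 < T) {C : ℝ} (hC : 0 ≤ C) {U : ℝ → ℝ}
    (hUc : Continuous U) (hUl : ∀ p q : ℝ, |U p - U q| ≤ C * |p - q|) (x : ℝ) :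
    ∃ ξ, U ξ + T * legendre f ((x - ξ) / T) = HopfLax f T U x := by
  set A := Acst f C with hA
  set R := T * A + T * legendre f 0 + 1 with hR
  have hR1 : 1 ≤ R := by
    have := Acst_add_legendre_zero_nonneg hf (C := C) hC
    nlinarith
  set F : ℝ → ℝ := fun ξ => U ξ + T * legendre f ((x - ξ) / T) with hF
  have hFc : Continuous F := by
    apply hUc.add
    apply continuous_const.mul
    exact (legendre_cont hf).comp (by fun_prop)
  obtain ⟨ξ₀, hmem, hmin⟩ := (isCompact_Icc (a := x - R) (b := x + R)).exists_isMinOn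
    (nonempty_Icc.2 (by linarith)) hFc.continuousOn
  refine ⟨ξ₀, le_antisymm ?_ ?_⟩
  · -- F ξ₀ ≤ sInf
    apply le_csInf (Set.range_nonempty _)
    rintro _ ⟨ξ, rfl⟩
    by_cases hmemξ : ξ ∈ Icc (x - R) (x + R)
    · exact hmin hmemξ
    · have hxmem : x ∈ Icc (x - R) (x + R) := by
        constructor <;> nlinarith
      have hFx : F x = U x + T * legendre f 0 := by
        simp only [hF, sub_self, zero_div]
      have h1 : F ξ₀ ≤ F x := hmin hxmem
      have h2 : R < |x - ξ| := by
        rw [Set.mem_Icc, not_and_or, not_le, not_le] at hmemξ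
        rcases hmemξ with h | h
        · rw [abs_of_nonneg (by linarith)]
          linarith
        · rw [abs_of_nonpos (by linarith)]
          linarith
      have h3 := hopfLax_coercive hf hT hC hUl x ξ
      show F ξ₀ ≤ F ξ
      rw [hFx] at h1
      calc F ξ₀ ≤ U x + T * legendre f 0 := h1
        _ ≤ U x + |x - ξ| - T * A := by rw [hR] at h2; linarith
        _ ≤ F ξ := h3
  · exact csInf_le (hopfLax_bddBelow hf hT hC hUl x) ⟨ξ₀, rfl⟩

end Minimizer

section UTlemmas

variable {T : ℝ} {uT : ℝ → ℝ} {xc : ℝ}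

lemma uT_intervalIntegrable (huT : Measurable uT) {Cu : ℝ} (hbd : ∀ x, |uT x| ≤ Cu)
    (a b : ℝ) : IntervalIntegrable uT volume a b := by
  have key : ∀ p q : ℝ, p ≤ q → IntervalIntegrable uT volume p q := by
    intro p q hpq
    rw [intervalIntegrable_iff_integrableOn_Ioc_of_le hpq]
    apply MeasureTheory.Measure.integrableOn_of_bounded measure_Ioc_lt_top.ne
      huT.aestronglyMeasurable
    exact Filter.Eventually.of_forall fun x => by rw [Real.norm_eq_abs]; exact hbd x
  rcases le_total a b with h | h
  · exact key a b h
  · exact (key b a h).symm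

lemma UT_continuous (huT : Measurable uT) {Cu : ℝ} (hbd : ∀ x, |uT x| ≤ Cu) :
    Continuous (UT uT xc) :=
  intervalIntegral.continuous_primitive (fun a b => uT_intervalIntegrable huT hbd a b) xc

lemma UT_hasDerivAt (huT : Measurable uT) {Cu : ℝ} (hbd : ∀ x, |uT x| ≤ Cu) {y : ℝ}
    (hcont : ContinuousAt uT y) : HasDerivAt (UT uT xc) (uT y) y :=
  intervalIntegral.integral_hasDerivAt_right (uT_intervalIntegrable huT hbd xc y)
    huT.stronglyMeasurable.stronglyMeasurableAtFilter hcont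

lemma dense_cont_pts (hf : CondF f) (hT : 0 < T) (hO : Oleinik f T uT) :
    Dense {y : ℝ | ContinuousAt uT y} := by
  set h : ℝ → ℝ := fun x => deriv f (uT x) - x / T with hh
  have hanti : Antitone h := by
    intro x y hxy
    rcases eq_or_lt_of_le hxy with rfl | hlt
    · exact le_refl _
    · have ho := hO x (y - x) (by linarith)
      have hxy' : x + (y - x) = y := by ring
      rw [hxy'] at ho
      have hdiv : (y - x) / T = y / T - x / T := by ring
      simp only [hh]
      linarith [ho, hdiv ▸ ho]
  have hcount : Set.Countable {x : ℝ | ¬ContinuousAt h x} := hanti.countable_not_continuousAt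
  have hsub : {x : ℝ | ¬ContinuousAt h x}ᶜ ⊆ {y : ℝ | ContinuousAt uT y} := by
    intro y hy
    simp only [Set.mem_compl_iff, Set.mem_setOf_eq, not_not] at hy
    have huTeq : uT = fun z => ginv f (h z + z / T) := by
      funext z
      have : h z + z / T = deriv f (uT z) := by simp only [hh]; ring
      rw [this, ginv_left hf]
    rw [huTeq]
    exact ((ginv_cont hf).continuousAt).comp (hy.add ((continuous_id.div_const T).continuousAt))
  exact Dense.mono hsub (hcount.dense_compl ℝ)

end UTlemmas


section KeyStar

variable {T : ℝ} {uT : ℝ → ℝ} {xc : ℝ}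

/-- At every point `x`, the backward characteristic foot `x - T f'(u_T(x))` is a
minimizer of the Hopf–Lax functional, for every `U` with `S_T U = U_T`. -/
lemma key_star (hf : CondF f) (hT : 0 < T) (huT : Measurable uT) (hlc : LeftCts uT)
    (hO : Oleinik f T uT) {Cu : ℝ} (hbd : ∀ x, |uT x| ≤ Cu)
    {C : ℝ} (hC : 0 ≤ C) {U : ℝ → ℝ} (hUl : ∀ p q : ℝ, |U p - U q| ≤ C * |p - q|)
    (heq : ∀ x, HopfLax f T U x = UT uT xc x) (x : ℝ) :
    U (x - T * deriv f (uT x)) + T * legendre f (deriv f (uT x)) = UT uT xc x := by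
  have hUc : Continuous U := by
    have : LipschitzWith (Real.toNNReal C) U := by
      apply LipschitzWith.of_dist_le_mul
      intro p q
      rw [Real.dist_eq, Real.dist_eq, Real.coe_toNNReal _ hC]
      exact hUl p q
    exact this.continuous
  -- Step 1: the claim at continuity points of uT
  have step1 : ∀ y : ℝ, ContinuousAt uT y →
      U (y - T * deriv f (uT y)) + T * legendre f (deriv f (uT y)) = UT uT xc y := by
    intro y hy
    obtain ⟨ξ, hξ⟩ := exists_minimizer hf hT hC hUc hUl y
    set s := (y - ξ) / T with hs
    set φ : ℝ → ℝ := fun z => U ξ + T * legendre f ((z - ξ) / T) - UT uT xc z with hφ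
    have hphi_nonneg : ∀ z, 0 ≤ φ z := by
      intro z
      have h1 : UT uT xc z ≤ U ξ + T * legendre f ((z - ξ) / T) := by
        rw [← heq z]
        exact csInf_le (hopfLax_bddBelow hf hT hC hUl z) ⟨ξ, rfl⟩
      simp only [hφ]
      linarith
    have hphiy : φ y = 0 := by
      simp only [hφ, ← hs]
      rw [hξ, heq y]
      ring
    have hinner : HasDerivAt (fun z : ℝ => (z - ξ) / T) (1 / T) y := by
      have := ((hasDerivAt_id y).sub_const ξ).div_const T
      simpa using this
    have houter : HasDerivAt (legendre f) (ginv f s) s := legendre_hasDerivAt hf s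
    have hcomp : HasDerivAt (fun z : ℝ => legendre f ((z - ξ) / T)) (ginv f s * (1 / T)) y :=
      by have := HasDerivAt.comp y houter hinner; exact this
    have hmul : HasDerivAt (fun z : ℝ => T * legendre f ((z - ξ) / T))
        (T * (ginv f s * (1 / T))) y := hcomp.const_mul T
    have hUT : HasDerivAt (UT uT xc) (uT y) y := UT_hasDerivAt huT hbd hy
    have hφd : HasDerivAt φ (T * (ginv f s * (1 / T)) - uT y) y := by
      have h1 := ((hasDerivAt_const y (U ξ)).add hmul).sub hUT
      exact h1.congr_deriv (by ring)
    have hmin : IsLocalMin φ y := by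
      apply Filter.Eventually.of_forall
      intro z
      rw [hphiy]
      exact hphi_nonneg z
    have hzero := hmin.hasDerivAt_eq_zero hφd
    have hgs : ginv f s = uT y := by
      have hTs : T * (ginv f s * (1 / T)) = ginv f s := by field_simp
      rw [hTs] at hzero
      linarith
    have hs_eq : s = deriv f (uT y) := by
      rw [← hgs]
      exact (ginv_right hf s).symm
    have hξ_eq : ξ = y - T * deriv f (uT y) := by
      have h1 : (y - ξ) / T = deriv f (uT y) := by rw [← hs, hs_eq]
      field_simp at h1
      linarith
    rw [← hξ_eq, ← hs_eq, hs]
    rw [heq y] at hξ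
    exact hξ
  -- Step 2: pass to the limit from the left using left continuity
  have hDense := dense_cont_pts hf hT hO
  have hex : ∀ k : ℕ, ∃ y, y ∈ Set.Ioo (x - 1 / (k + 1)) x ∧ ContinuousAt uT y := by
    intro k
    have hne : (Set.Ioo (x - 1 / ((k : ℝ) + 1)) x).Nonempty := by
      apply nonempty_Ioo.2
      have : (0:ℝ) < 1 / ((k : ℝ) + 1) := by positivity
      linarith
    obtain ⟨y, hy1, hy2⟩ := hDense.exists_mem_open isOpen_Ioo hne
    exact ⟨y, hy2, hy1⟩
  choose Y hY1 hY2 using hex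
  have hYlim : Tendsto Y atTop (nhds x) := by
    have hlow : Tendsto (fun k : ℕ => x - 1 / ((k : ℝ) + 1)) atTop (nhds x) := by
      have := tendsto_one_div_add_atTop_nhds_zero_nat.const_sub x
      simpa using this
    exact tendsto_of_tendsto_of_tendsto_of_le_of_le hlow tendsto_const_nhds
      (fun k => (hY1 k).1.le) (fun k => (hY1 k).2.le)
  have hYlim' : Tendsto Y atTop (nhdsWithin x (Set.Iio x)) := by
    rw [tendsto_nhdsWithin_iff]
    exact ⟨hYlim, Filter.Eventually.of_forall fun k => (hY1 k).2⟩
  have huTY : Tendsto (fun k => uT (Y k)) atTop (nhds (uT x)) := (hlc x).comp hYlim'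
  have hFY : ∀ k, U (Y k - T * deriv f (uT (Y k))) + T * legendre f (deriv f (uT (Y k)))
      = UT uT xc (Y k) := fun k => step1 _ (hY2 k)
  have hd : Tendsto (fun k => deriv f (uT (Y k))) atTop (nhds (deriv f (uT x))) :=
    ((cont_derivf hf).continuousAt).tendsto.comp huTY
  have harg : Tendsto (fun k => Y k - T * deriv f (uT (Y k))) atTop
      (nhds (x - T * deriv f (uT x))) := hYlim.sub (hd.const_mul T)
  have hLHS : Tendsto (fun k => U (Y k - T * deriv f (uT (Y k)))
      + T * legendre f (deriv f (uT (Y k)))) atTop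
      (nhds (U (x - T * deriv f (uT x)) + T * legendre f (deriv f (uT x)))) := by
    apply Tendsto.add
    · exact (hUc.continuousAt).tendsto.comp harg
    · exact Tendsto.const_mul T (((legendre_cont hf).continuousAt).tendsto.comp hd)
  have hRHS : Tendsto (fun k => UT uT xc (Y k)) atTop (nhds (UT uT xc x)) :=
    ((UT_continuous huT hbd).continuousAt).tendsto.comp hYlim
  exact tendsto_nhds_unique (Tendsto.congr (fun k => hFY k) hLHS) hRHS

end KeyStar


section Membership

variable {T : ℝ} {uT : ℝ → ℝ} {xc : ℝ} {J : Set ℝ}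

lemma Icc_subset_J (hJne : J.Nonempty) (hJcp : IsCompact J) (hJoc : J.OrdConnected) :
    Set.Icc (sInf J) (sSup J) ⊆ J :=
  hJoc.out (hJcp.sInf_mem hJne) (hJcp.sSup_mem hJne)

lemma J_subset_Icc (hJcp : IsCompact J) : J ⊆ Set.Icc (sInf J) (sSup J) := fun x hx =>
  ⟨csInf_le hJcp.bddBelow hx, le_csSup hJcp.bddAbove hx⟩

lemma dq_of_mem (hJcp : IsCompact J) {U : ℝ → ℝ} (hU : U ∈ IIT f T uT xc J) :
    DQ (sInf J) (sSup J) U := by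
  obtain ⟨⟨K, hK⟩, hae, hHL⟩ := hU
  apply dq_of_ae_deriv_mem hK
  filter_upwards [hae] with x hx
  exact J_subset_Icc hJcp hx

lemma mem_IIT_of_dq (hJne : J.Nonempty) (hJcp : IsCompact J) (hJoc : J.OrdConnected)
    {U : ℝ → ℝ} (hdq : DQ (sInf J) (sSup J) U)
    (hHL : ∀ x, HopfLax f T U x = UT uT xc x) : U ∈ IIT f T uT xc J := by
  refine ⟨⟨_, lipschitzWith_of_dq hdq⟩, ?_, hHL⟩
  filter_upwards [ae_deriv_mem_of_dq hdq] with x hx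
  exact Icc_subset_J hJne hJcp hJoc hx

lemma hopfLax_eq_of {W : ℝ → ℝ}
    (hge : ∀ x ξ : ℝ, UT uT xc x ≤ W ξ + T * legendre f ((x - ξ) / T))
    (hle : ∀ x : ℝ, ∃ ξ, W ξ + T * legendre f ((x - ξ) / T) ≤ UT uT xc x) :
    ∀ x, HopfLax f T W x = UT uT xc x := by
  intro x
  apply le_antisymm
  · obtain ⟨ξ, hξ⟩ := hle x
    have hbdd : BddBelow (Set.range fun η => W η + T * legendre f ((x - η) / T)) := by
      refine ⟨UT uT xc x, ?_⟩
      rintro _ ⟨η, rfl⟩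
      exact hge x η
    calc HopfLax f T W x ≤ W ξ + T * legendre f ((x - ξ) / T) := csInf_le hbdd ⟨ξ, rfl⟩
      _ ≤ UT uT xc x := hξ
  · exact le_csInf (Set.range_nonempty _) (by rintro _ ⟨η, rfl⟩; exact hge x η)

lemma UT_le_elem (hf : CondF f) (hT : 0 < T) {C : ℝ} (hC : 0 ≤ C) {U : ℝ → ℝ}
    (hUl : ∀ p q : ℝ, |U p - U q| ≤ C * |p - q|)
    (heq : ∀ x, HopfLax f T U x = UT uT xc x) (x ξ : ℝ) :
    UT uT xc x ≤ U ξ + T * legendre f ((x - ξ) / T) := by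
  rw [← heq x]
  exact csInf_le (hopfLax_bddBelow hf hT hC hUl x) ⟨ξ, rfl⟩

lemma uT_abs_bound (hJcp : IsCompact J) (huTJ : ∀ x, uT x ∈ J) (x : ℝ) :
    |uT x| ≤ max |sInf J| |sSup J| := by
  obtain ⟨h1, h2⟩ := J_subset_Icc hJcp (huTJ x)
  rw [abs_le]
  constructor
  · have h4 := neg_abs_le (sInf J)
    have h3 : |sInf J| ≤ max |sInf J| |sSup J| := le_max_left _ _
    linarith
  · have h4 := le_abs_self (sSup J)
    have h3 : |sSup J| ≤ max |sInf J| |sSup J| := le_max_right _ _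
    linarith

lemma convex_IIT (hf : CondF f) (hT : 0 < T) (hJne : J.Nonempty) (hJcp : IsCompact J)
    (hJoc : J.OrdConnected) (huT : Measurable uT) (hlc : LeftCts uT) (huTJ : ∀ x, uT x ∈ J)
    (hO : Oleinik f T uT) : Convex ℝ (IIT f T uT xc J) := by
  intro U hU V hV a b ha hb hab
  set m := sInf J
  set M := sSup J
  set C := max |m| |M| with hCdef
  have hC : 0 ≤ C := le_trans (abs_nonneg _) (le_max_left _ _)
  have hdqU := dq_of_mem hJcp hU
  have hdqV := dq_of_mem hJcp hV
  have hUl := abs_sub_le_of_dq hdqU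
  have hVl := abs_sub_le_of_dq hdqV
  have hbd := uT_abs_bound hJcp huTJ
  have hW : a • U + b • V = fun x => a * U x + b * V x := rfl
  rw [hW]
  apply mem_IIT_of_dq hJne hJcp hJoc (dq_smul_add hdqU hdqV ha hb hab)
  apply hopfLax_eq_of
  · intro x ξ
    show UT uT xc x ≤ a * U ξ + b * V ξ + T * legendre f ((x - ξ) / T)
    have h1 := UT_le_elem hf hT hC hUl hU.2.2 x ξ
    have h2 := UT_le_elem hf hT hC hVl hV.2.2 x ξ
    have e1 : a * UT uT xc x + b * UT uT xc x = UT uT xc x := by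
      rw [← add_mul, hab, one_mul]
    have e2 : a * (T * legendre f ((x - ξ) / T)) + b * (T * legendre f ((x - ξ) / T))
        = T * legendre f ((x - ξ) / T) := by rw [← add_mul, hab, one_mul]
    have g1 := mul_le_mul_of_nonneg_left h1 ha
    have g2 := mul_le_mul_of_nonneg_left h2 hb
    rw [mul_add] at g1 g2
    linarith
  · intro x
    refine ⟨x - T * deriv f (uT x), ?_⟩
    have h1 := key_star hf hT huT hlc hO hbd hC hUl hU.2.2 x
    have h2 := key_star hf hT huT hlc hO hbd hC hVl hV.2.2 x
    have harg : (x - (x - T * deriv f (uT x))) / T = deriv f (uT x) := by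
      field_simp; ring
    rw [harg]
    show a * U (x - T * deriv f (uT x)) + b * V (x - T * deriv f (uT x))
        + T * legendre f (deriv f (uT x)) ≤ UT uT xc x
    have e1 : a * UT uT xc x + b * UT uT xc x = UT uT xc x := by
      rw [← add_mul, hab, one_mul]
    have g1 : a * U (x - T * deriv f (uT x)) + a * (T * legendre f (deriv f (uT x)))
        = a * UT uT xc x := by rw [← h1]; ring
    have g2 : b * V (x - T * deriv f (uT x)) + b * (T * legendre f (deriv f (uT x)))
        = b * UT uT xc x := by rw [← h2]; ring
    have e2 : a * (T * legendre f (deriv f (uT x))) + b * (T * legendre f (deriv f (uT x)))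
        = T * legendre f (deriv f (uT x)) := by rw [← add_mul, hab, one_mul]
    linarith

end Membership


section Compactness

variable {T : ℝ} {uT : ℝ → ℝ} {xc : ℝ} {J : Set ℝ}

lemma pt_bounds (hf : CondF f) (hT : 0 < T) (hJcp : IsCompact J) {U : ℝ → ℝ}
    (hU : U ∈ IIT f T uT xc J) (x : ℝ) :
    U x ∈ Set.Icc (UT uT xc x - T * legendre f 0)
      (UT uT xc x + T * Acst f (max |sInf J| |sSup J|)) := by
  set C := max |sInf J| |sSup J| with hCdef
  have hC : 0 ≤ C := le_trans (abs_nonneg _) (le_max_left _ _)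
  have hdq := dq_of_mem hJcp hU
  have hUl := abs_sub_le_of_dq hdq
  constructor
  · have h := UT_le_elem hf hT hC hUl hU.2.2 x x
    rw [sub_self, zero_div] at h
    linarith
  · obtain ⟨ξ, hξ⟩ := exists_minimizer hf hT hC (lipschitzWith_of_dq hdq).continuous hUl x
    have hco := hopfLax_coercive hf hT hC hUl x ξ
    rw [hξ, hU.2.2 x] at hco
    have h0 := abs_nonneg (x - ξ)
    linarith

lemma compact_IIT (hf : CondF f) (hT : 0 < T) (hJne : J.Nonempty) (hJcp : IsCompact J)
    (hJoc : J.OrdConnected) (huT : Measurable uT) (hlc : LeftCts uT) (huTJ : ∀ x, uT x ∈ J)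
    (hO : Oleinik f T uT) :
    ∀ u : ℕ → ℝ → ℝ, (∀ n, u n ∈ IIT f T uT xc J) →
      ∃ U ∈ IIT f T uT xc J, ∃ φ : ℕ → ℕ, StrictMono φ ∧
        ∀ K : Set ℝ, IsCompact K →
          TendstoUniformlyOn (fun n => u (φ n)) U atTop K := by
  intro u hu
  set m := sInf J with hm
  set M := sSup J with hM
  set C := max |m| |M| with hCdef
  have hC : 0 ≤ C := le_trans (abs_nonneg _) (le_max_left _ _)
  have hdq : ∀ n, DQ m M (u n) := fun n => dq_of_mem hJcp (hu n)
  have hul : ∀ n (p q : ℝ), |u n p - u n q| ≤ C * |p - q| := fun n => abs_sub_le_of_dq (hdq n)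
  have hbd := uT_abs_bound hJcp huTJ
  set lo : ℝ → ℝ := fun x => UT uT xc x - T * legendre f 0 with hlo
  set hi : ℝ → ℝ := fun x => UT uT xc x + T * Acst f C with hhi
  have hbds : ∀ n (x : ℝ), u n x ∈ Set.Icc (lo x) (hi x) := fun n x =>
    pt_bounds hf hT hJcp (hu n) x
  -- extraction of a subsequence converging at all rationals
  have hKcomp : IsCompact (Set.univ.pi fun q : ℚ => Set.Icc (lo q) (hi q)) :=
    isCompact_univ_pi fun q => isCompact_Icc
  obtain ⟨g₀, hg₀mem, φ, hφ, hconv⟩ :=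
    hKcomp.isSeqCompact (x := fun n (q : ℚ) => u n (q : ℝ))
      (fun n => Set.mem_univ_pi.2 fun q => hbds n q)
  have hratl : ∀ q : ℚ, Tendsto (fun n => u (φ n) (q : ℝ)) atTop (nhds (g₀ q)) := by
    intro q
    exact (tendsto_pi_nhds.1 hconv) q
  -- convergence at every real point
  have hcauchy : ∀ x : ℝ, ∃ l, Tendsto (fun n => u (φ n) x) atTop (nhds l) := by
    intro x
    apply cauchySeq_tendsto_of_complete
    rw [Metric.cauchySeq_iff]
    intro ε hε
    have hC1 : (0:ℝ) < C + 1 := by linarith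
    obtain ⟨q, hq⟩ := exists_rat_near x (show (0:ℝ) < ε / (3 * (C + 1)) by positivity)
    have hc := (hratl q).cauchySeq
    rw [Metric.cauchySeq_iff] at hc
    obtain ⟨N, hN⟩ := hc (ε / 3) (by positivity)
    refine ⟨N, fun p hp r hr => ?_⟩
    have hd1 : dist (u (φ p) x) (u (φ p) (q : ℝ)) ≤ ε / 3 := by
      rw [Real.dist_eq]
      calc |u (φ p) x - u (φ p) (q : ℝ)| ≤ C * |x - (q : ℝ)| := hul (φ p) x q
        _ ≤ C * (ε / (3 * (C + 1))) :=
            mul_le_mul_of_nonneg_left hq.le hC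
        _ ≤ (C + 1) * (ε / (3 * (C + 1))) := by
            apply mul_le_mul_of_nonneg_right (by linarith) (by positivity)
        _ = ε / 3 := by field_simp
    have hd3 : dist (u (φ r) (q : ℝ)) (u (φ r) x) ≤ ε / 3 := by
      rw [Real.dist_eq]
      calc |u (φ r) (q : ℝ) - u (φ r) x| ≤ C * |(q : ℝ) - x| := hul (φ r) q x
        _ = C * |x - (q : ℝ)| := by rw [abs_sub_comm]
        _ ≤ C * (ε / (3 * (C + 1))) := mul_le_mul_of_nonneg_left hq.le hC
        _ ≤ (C + 1) * (ε / (3 * (C + 1))) := by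
            apply mul_le_mul_of_nonneg_right (by linarith) (by positivity)
        _ = ε / 3 := by field_simp
    have hd2 : dist (u (φ p) (q : ℝ)) (u (φ r) (q : ℝ)) < ε / 3 := hN p hp r hr
    calc dist (u (φ p) x) (u (φ r) x) ≤ dist (u (φ p) x) (u (φ p) (q : ℝ))
          + dist (u (φ p) (q : ℝ)) (u (φ r) (q : ℝ))
          + dist (u (φ r) (q : ℝ)) (u (φ r) x) := dist_triangle4 _ _ _ _
      _ < ε / 3 + ε / 3 + ε / 3 := by
          have := dist_nonneg (x := u (φ p) (q : ℝ)) (y := u (φ r) (q : ℝ))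
          linarith
      _ = ε := by ring
  choose U hUlim using hcauchy
  have hdqU : DQ m M U := dq_of_tendsto (fun n => hdq (φ n)) hUlim
  have hUl := abs_sub_le_of_dq hdqU
  -- membership of the limit
  have hmem : U ∈ IIT f T uT xc J := by
    apply mem_IIT_of_dq hJne hJcp hJoc hdqU
    apply hopfLax_eq_of
    · intro x ξ
      have hterm : Tendsto (fun n => u (φ n) ξ + T * legendre f ((x - ξ) / T)) atTop
          (nhds (U ξ + T * legendre f ((x - ξ) / T))) := (hUlim ξ).add_const _
      apply ge_of_tendsto hterm
      apply Filter.Eventually.of_forall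
      intro n
      exact UT_le_elem hf hT hC (hul (φ n)) (hu (φ n)).2.2 x ξ
    · intro x
      refine ⟨x - T * deriv f (uT x), ?_⟩
      have harg : (x - (x - T * deriv f (uT x))) / T = deriv f (uT x) := by field_simp; ring
      rw [harg]
      have hks : ∀ n, u (φ n) (x - T * deriv f (uT x)) + T * legendre f (deriv f (uT x))
          = UT uT xc x := fun n =>
        key_star hf hT huT hlc hO hbd hC (hul (φ n)) (hu (φ n)).2.2 x
      have hterm : Tendsto (fun n => u (φ n) (x - T * deriv f (uT x))
          + T * legendre f (deriv f (uT x))) atTop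
          (nhds (U (x - T * deriv f (uT x)) + T * legendre f (deriv f (uT x)))) :=
        (hUlim _).add_const _
      have hconst : Tendsto (fun _ : ℕ => UT uT xc x) atTop (nhds (UT uT xc x)) :=
        tendsto_const_nhds
      have := tendsto_nhds_unique (Tendsto.congr (fun n => (hks n).symm) hconst) hterm
      exact le_of_eq this.symm
  -- uniform convergence on compact sets
  refine ⟨U, hmem, φ, hφ, ?_⟩
  intro K hK
  rw [Metric.tendstoUniformlyOn_iff]
  intro ε hε
  have hC1 : (0:ℝ) < C + 1 := by linarith
  set δ := ε / (3 * (C + 1)) with hδ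
  have hδpos : 0 < δ := by positivity
  obtain ⟨t, htK, htfin, hcover⟩ := finite_cover_balls_of_compact hK hδpos
  have hev : ∀ᶠ n in atTop, ∀ y ∈ t, dist (U y) (u (φ n) y) < ε / 3 := by
    rw [Set.Finite.eventually_all htfin]
    intro y _
    have hyt : ∀ᶠ n in atTop, u (φ n) y ∈ Metric.ball (U y) (ε / 3) :=
      (hUlim y) (Metric.ball_mem_nhds _ (by positivity))
    filter_upwards [hyt] with n hn
    rw [dist_comm]
    exact hn
  filter_upwards [hev] with n hn
  intro x hx
  obtain ⟨y, hyt, hxy⟩ := Set.mem_iUnion₂.1 (hcover hx)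
  have hxyd : dist x y < δ := Metric.mem_ball.1 hxy
  have hd1 : dist (U x) (U y) ≤ ε / 3 := by
    rw [Real.dist_eq]
    calc |U x - U y| ≤ C * |x - y| := hUl x y
      _ ≤ C * δ := mul_le_mul_of_nonneg_left (by rw [← Real.dist_eq]; exact hxyd.le) hC
      _ ≤ (C + 1) * δ := mul_le_mul_of_nonneg_right (by linarith) hδpos.le
      _ = ε / 3 := by rw [hδ]; field_simp
  have hd3 : dist (u (φ n) y) (u (φ n) x) ≤ ε / 3 := by
    rw [Real.dist_eq]
    calc |u (φ n) y - u (φ n) x| ≤ C * |y - x| := hul (φ n) y x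
      _ = C * |x - y| := by rw [abs_sub_comm]
      _ ≤ C * δ := mul_le_mul_of_nonneg_left (by rw [← Real.dist_eq]; exact hxyd.le) hC
      _ ≤ (C + 1) * δ := mul_le_mul_of_nonneg_right (by linarith) hδpos.le
      _ = ε / 3 := by rw [hδ]; field_simp
  have hd2 : dist (U y) (u (φ n) y) < ε / 3 := hn y hyt
  calc dist (U x) (u (φ n) x) ≤ dist (U x) (U y) + dist (U y) (u (φ n) y)
        + dist (u (φ n) y) (u (φ n) x) := dist_triangle4 _ _ _ _
    _ < ε / 3 + ε / 3 + ε / 3 := by linarith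
    _ = ε := by ring

end Compactness

end Stmt17

theorem stmt_17 (f : ℝ → ℝ) (hf : CondF f) (T : ℝ) (hT : 0 < T)
    (J : Set ℝ) (hJne : J.Nonempty) (hJcp : IsCompact J) (hJoc : J.OrdConnected)
    (uT : ℝ → ℝ) (huT : Measurable uT)
    (hlc : LeftCts uT) (huTJ : ∀ x, uT x ∈ J) (hO : Oleinik f T uT) (xc : ℝ) :
    Convex ℝ (IIT f T uT xc J) ∧
    ∀ u : ℕ → ℝ → ℝ, (∀ n, u n ∈ IIT f T uT xc J) →
      ∃ U ∈ IIT f T uT xc J, ∃ φ : ℕ → ℕ, StrictMono φ ∧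
        ∀ K : Set ℝ, IsCompact K →
          TendstoUniformlyOn (fun n => u (φ n)) U atTop K :=
  ⟨Stmt17.convex_IIT hf hT hJne hJcp hJoc huT hlc huTJ hO,
   Stmt17.compact_IIT hf hT hJne hJcp hJoc huT hlc huTJ hO⟩
end
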